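/- arXiv:1608.00127 — 4 statements merged into one kernel-verified Lean document; each statement's English description precedes it below -/
import Mathlib

section
/- For every constant ε > 0 there exists a constant c > 1 such that for all sufficiently large n there is a function Ext : {0,1}^n × {0,1}^n → {0,1} which is a two-source extractor for min-entropy k = ⌈c·log n·log log n⌉ with error ε: for every pair of independent (n,k)-sources X and Y, Δ(Ext(X,Y), U_1) ≤ ε. -/
open Finset Real

/-- Bit strings of length `n`. -/
abbrev BS (n : ℕ) := Fin n → Bool

noncomputable section

/-- `p` is a probability distribution on the finite type `α`. -/
def IsDist {α : Type*} [Fintype α] (p : α → ℝ) : Prop :=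
  (∀ x, 0 ≤ p x) ∧ ∑ x, p x = 1

/-- Statistical distance between two distributions on a finite type. -/
def statDist {α : Type*} [Fintype α] (p q : α → ℝ) : ℝ :=
  (∑ x, |p x - q x|) / 2

/-- Pushforward of a distribution along a function. -/
def distMap {α β : Type*} [Fintype α] [DecidableEq β] (f : α → β) (p : α → ℝ) : β → ℝ :=
  fun y => ∑ x ∈ Finset.univ.filter (fun x => f x = y), p x

/-- Product (independent joint) distribution. -/
def distProd {α β : Type*} (p : α → ℝ) (q : β → ℝ) : α × β → ℝ :=
  fun z => p z.1 * q z.2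

/-- Product of finitely many distributions (mutually independent joint distribution). -/
def distPi {ι : Type*} {α : ι → Type*} [Fintype ι] (p : ∀ i, α i → ℝ) : (∀ i, α i) → ℝ :=
  fun x => ∏ i, p i (x i)

/-- The uniform distribution on a finite type. -/
def unifDist (α : Type*) [Fintype α] : α → ℝ :=
  fun _ => (Fintype.card α : ℝ)⁻¹

/-- `p` has min-entropy at least `k`, i.e. every point has probability at most `2 ^ (-k)`. -/
def MinEntropyGE {α : Type*} (p : α → ℝ) (k : ℝ) : Prop :=
  ∀ x, p x ≤ (2:ℝ) ^ (-k)

/-- `ext` is a two-source extractor for min-entropy `k` with error `ε`. -/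
def IsTwoSourceExt {n m : ℕ} (ext : BS n → BS n → BS m) (k ε : ℝ) : Prop :=
  ∀ pX pY : BS n → ℝ, IsDist pX → IsDist pY →
    MinEntropyGE pX k → MinEntropyGE pY k →
      statDist (distMap (fun z : BS n × BS n => ext z.1 z.2) (distProd pX pY))
        (unifDist (BS m)) ≤ ε

lemma sinh_aux (x : ℝ) (h : 0 ≤ x) : Real.exp x - Real.exp (-x) ≤ 2 * x * Real.exp x := by
  have heq : Real.exp (-x) = Real.exp x * Real.exp (-2*x) := by
    rw [← Real.exp_add]; ring_nf
  have h1 : 1 + (-2*x) ≤ Real.exp (-2*x) := Real.add_one_le_exp _ |>.trans_eq' (by ring)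
  have h2 := mul_le_mul_of_nonneg_left h1 (Real.exp_pos x).le
  nlinarith [Real.exp_pos x]
lemma cosh_aux (t : ℝ) (h : 0 ≤ t) :
    Real.exp t + Real.exp (-t) ≤ 2 * Real.exp (t^2 * Real.exp t / 2) := by
  have h1 := sinh_aux (t/2) (by linarith)
  have hsq : (Real.exp (t/2) - Real.exp (-(t/2)))^2 = Real.exp t + Real.exp (-t) - 2 := by
    have e1 : Real.exp (t/2) * Real.exp (t/2) = Real.exp t := by rw [← Real.exp_add]; ring_nf
    have e2 : Real.exp (-(t/2)) * Real.exp (-(t/2)) = Real.exp (-t) := by rw [← Real.exp_add]; ring_nf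
    have e3 : Real.exp (t/2) * Real.exp (-(t/2)) = 1 := by rw [← Real.exp_add]; simp
    nlinarith
  have hnn : 0 ≤ Real.exp (t/2) - Real.exp (-(t/2)) := by
    have := Real.exp_le_exp.2 (show -(t/2) ≤ t/2 by linarith); linarith
  have hb : (Real.exp (t/2) - Real.exp (-(t/2)))^2 ≤ (2 * (t/2) * Real.exp (t/2))^2 := by
    apply sq_le_sq'
    · nlinarith [mul_nonneg (mul_nonneg (show (0:ℝ) ≤ 2*(t/2) by linarith) h) (Real.exp_pos (t/2)).le]
    · exact h1
  have e4 : (2 * (t/2) * Real.exp (t/2))^2 = t^2 * Real.exp t := by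
    have e1 : Real.exp (t/2) * Real.exp (t/2) = Real.exp t := by rw [← Real.exp_add]; ring_nf
    nlinarith
  have h5 : 1 + t^2 * Real.exp t / 2 ≤ Real.exp (t^2 * Real.exp t / 2) :=
    Real.add_one_le_exp _ |>.trans_eq' (by ring)
  nlinarith

lemma exists_topset {α : Type*} [Fintype α] [DecidableEq α] (g : α → ℝ) :
    ∀ M : ℕ, M ≤ Fintype.card α →
      ∃ S : Finset α, S.card = M ∧ ∀ x ∉ S, ∀ y ∈ S, g x ≤ g y := by
  intro M
  induction M with
  | zero => exact fun _ => ⟨∅, by simp⟩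
  | succ m ih =>
    intro h
    obtain ⟨S, hc, hS⟩ := ih (by omega)
    have hne : (Sᶜ : Finset α).Nonempty := by
      rw [← Finset.card_pos, Finset.card_compl, hc]; omega
    obtain ⟨a, haS, hmax⟩ := Finset.exists_max_image Sᶜ g hne
    have haS' : a ∉ S := Finset.mem_compl.mp haS
    refine ⟨insert a S, by rw [Finset.card_insert_of_notMem haS', hc], ?_⟩
    intro x hx y hy
    have hxa : x ≠ a := fun h => hx (h ▸ Finset.mem_insert_self a S)
    have hxS : x ∉ S := fun h => hx (Finset.mem_insert_of_mem h)
    rcases Finset.mem_insert.mp hy with rfl | hyS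
    · exact hmax x (Finset.mem_compl.mpr hxS)
    · exact hS x hxS y hyS

lemma extremal_le {α : Type*} [Fintype α] [DecidableEq α] (p g : α → ℝ) (M : ℕ) (hM : 0 < M)
    (hcard : M ≤ Fintype.card α) (hp0 : ∀ x, 0 ≤ p x) (hp1 : ∑ x, p x = 1)
    (hbd : ∀ x, p x ≤ (M:ℝ)⁻¹) (B : ℝ)
    (hB : ∀ S : Finset α, S.card = M → ∑ x ∈ S, g x ≤ B) :
    ∑ x, p x * g x ≤ B / M := by
  obtain ⟨S, hSc, hStop⟩ := exists_topset g M hcard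
  have hSne : S.Nonempty := Finset.card_pos.mp (hSc ▸ hM)
  obtain ⟨x₀, hx₀S, hmin⟩ := Finset.exists_min_image S g hSne
  set t := g x₀ with ht
  have hM0 : (M:ℝ) ≠ 0 := Nat.cast_ne_zero.mpr hM.ne'
  have key : ∑ x, p x * (g x - t) ≤ ∑ x ∈ S, (M:ℝ)⁻¹ * (g x - t) := by
    rw [← Finset.sum_add_sum_compl S]
    have h2 : ∑ x ∈ Sᶜ, p x * (g x - t) ≤ 0 := by
      apply Finset.sum_nonpos
      intro x hx
      have := hStop x (Finset.mem_compl.mp hx) x₀ hx₀S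
      exact mul_nonpos_of_nonneg_of_nonpos (hp0 x) (by linarith)
    have h1 : ∑ x ∈ S, p x * (g x - t) ≤ ∑ x ∈ S, (M:ℝ)⁻¹ * (g x - t) := by
      apply Finset.sum_le_sum
      intro x hx
      exact mul_le_mul_of_nonneg_right (hbd x) (by linarith [hmin x hx])
    linarith
  have expand : ∑ x ∈ S, (M:ℝ)⁻¹ * (g x - t) = (M:ℝ)⁻¹ * ∑ x ∈ S, g x - t := by
    rw [← Finset.mul_sum, Finset.sum_sub_distrib, Finset.sum_const, hSc, nsmul_eq_mul]
    field_simp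
  have lhs : ∑ x, p x * (g x - t) = ∑ x, p x * g x - t := by
    have : ∑ x, p x * (g x - t) = ∑ x, p x * g x - (∑ x, p x) * t := by
      rw [Finset.sum_mul, ← Finset.sum_sub_distrib]; congr 1; ext x; ring
    rw [this, hp1, one_mul]
  have hBS : (M:ℝ)⁻¹ * ∑ x ∈ S, g x ≤ B / M := by
    rw [div_eq_inv_mul]
    exact mul_le_mul_of_nonneg_left (hB S hSc) (by positivity)
  linarith [key.trans_eq expand, lhs]

lemma extremal_abs {α : Type*} [Fintype α] [DecidableEq α] (p g : α → ℝ) (M : ℕ) (hM : 0 < M)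
    (hcard : M ≤ Fintype.card α) (hp0 : ∀ x, 0 ≤ p x) (hp1 : ∑ x, p x = 1)
    (hbd : ∀ x, p x ≤ (M:ℝ)⁻¹) (B : ℝ)
    (hB : ∀ S : Finset α, S.card = M → |∑ x ∈ S, g x| ≤ B) :
    |∑ x, p x * g x| ≤ B / M := by
  rw [abs_le]
  constructor
  · have := extremal_le p (fun x => -g x) M hM hcard hp0 hp1 hbd B (fun S hS => by
      rw [Finset.sum_neg_distrib]
      linarith [abs_le.mp (hB S hS)] )
    simp only [mul_neg, Finset.sum_neg_distrib] at this
    linarith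
  · exact extremal_le p g M hM hcard hp0 hp1 hbd B (fun S hS => (le_abs_self _).trans (hB S hS))

def sgn : Bool → ℝ := fun b => if b then 1 else -1

lemma sum_exp_eq {Z : Type*} [Fintype Z] [DecidableEq Z] (A : Finset Z) (t : ℝ) :
    ∑ f : Z → Bool, Real.exp (t * ∑ z ∈ A, sgn (f z))
      = (Real.exp t + Real.exp (-t)) ^ A.card * 2 ^ (Fintype.card Z - A.card) := by
  have step1 : ∀ f : Z → Bool,
      Real.exp (t * ∑ z ∈ A, sgn (f z))
        = ∏ z, (fun z b => if z ∈ A then Real.exp (t * sgn b) else 1) z (f z) := by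
    intro f
    simp only []
    rw [Finset.prod_ite_mem, Finset.univ_inter, Finset.mul_sum, Real.exp_sum]
  have main := Finset.prod_univ_sum (fun _ : Z => (Finset.univ : Finset Bool))
      (fun z b => if z ∈ A then Real.exp (t * sgn b) else 1)
  rw [Fintype.piFinset_univ] at main
  simp only [step1]
  rw [← main]
  have : ∀ z : Z, (∑ b : Bool, if z ∈ A then Real.exp (t * sgn b) else 1)
      = (if z ∈ A then Real.exp t + Real.exp (-t) else 2) := by
    intro z
    by_cases h : z ∈ A
    · simp only [h, if_true, Fintype.sum_bool, sgn]
      norm_num [add_comm]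
    · simp [h]
  rw [Finset.prod_congr rfl (fun z _ => this z), Finset.prod_ite, Finset.prod_const,
    Finset.prod_const]
  congr 2
  · simp [Finset.filter_mem_eq_inter]
  · rw [← Finset.card_compl]
    congr 1
    ext z
    simp

lemma count_bad {Z : Type*} [Fintype Z] [DecidableEq Z] (A : Finset Z) (t b : ℝ)
    (ht : 0 ≤ t) [DecidablePred fun f : Z → Bool => b ≤ |∑ z ∈ A, sgn (f z)|] :
    ((Finset.univ.filter (fun f : Z → Bool => b ≤ |∑ z ∈ A, sgn (f z)|)).card : ℝ)
      ≤ 2 * Real.exp (-(t * b)) * ((Real.exp t + Real.exp (-t)) ^ A.card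
          * 2 ^ (Fintype.card Z - A.card)) := by
  classical
  set E : ℝ := (Real.exp t + Real.exp (-t)) ^ A.card * 2 ^ (Fintype.card Z - A.card) with hE
  set X : (Z → Bool) → ℝ := fun f => ∑ z ∈ A, sgn (f z) with hX
  have moment_t : ∑ f : Z → Bool, Real.exp (t * X f) = E := sum_exp_eq A t
  have moment_nt : ∑ f : Z → Bool, Real.exp ((-t) * X f) = E := by
    rw [sum_exp_eq A (-t), neg_neg, add_comm (Real.exp (-t))]
  have key : ∀ (P : (Z → Bool) → Prop) (_ : DecidablePred P) (s : ℝ),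
      (∑ f : Z → Bool, Real.exp (s * X f) = E) →
      (∀ f, P f → t * b ≤ s * X f) →
      ((Finset.univ.filter P).card : ℝ) * Real.exp (t * b) ≤ E := by
    intro P _ s moment hP
    calc ((Finset.univ.filter P).card : ℝ) * Real.exp (t * b)
        = ∑ _f ∈ Finset.univ.filter P, Real.exp (t * b) := by
          rw [Finset.sum_const, nsmul_eq_mul]
      _ ≤ ∑ f ∈ Finset.univ.filter P, Real.exp (s * X f) := by
          apply Finset.sum_le_sum
          intro f hf
          exact Real.exp_le_exp.mpr (hP f (Finset.mem_filter.mp hf).2)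
      _ ≤ ∑ f : Z → Bool, Real.exp (s * X f) := by
          apply Finset.sum_le_sum_of_subset_of_nonneg (Finset.filter_subset _ _)
          intro f _ _
          positivity
      _ = E := moment
  have split : ((Finset.univ.filter (fun f : Z → Bool => b ≤ |X f|)).card : ℝ)
      ≤ ((Finset.univ.filter (fun f : Z → Bool => b ≤ X f)).card : ℝ)
        + ((Finset.univ.filter (fun f : Z → Bool => X f ≤ -b)).card : ℝ) := by
    rw [← Nat.cast_add]
    apply Nat.cast_le.mpr
    refine le_trans (Finset.card_le_card ?_) (Finset.card_union_le _ _)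
    intro f hf
    rw [Finset.mem_filter] at hf
    rw [Finset.mem_union, Finset.mem_filter, Finset.mem_filter]
    rcases le_abs'.mp hf.2 with h | h
    · right; exact ⟨Finset.mem_univ f, by linarith⟩
    · left; exact ⟨Finset.mem_univ f, h⟩
  have h1 := key (fun f => b ≤ X f) inferInstance t moment_t
    (fun f hf => mul_le_mul_of_nonneg_left hf ht)
  have h2 := key (fun f => X f ≤ -b) inferInstance (-t) moment_nt
    (fun f hf => by nlinarith)
  have hexp : (0:ℝ) < Real.exp (t * b) := Real.exp_pos _
  have total : ((Finset.univ.filter (fun f : Z → Bool => b ≤ |X f|)).card : ℝ)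
      * Real.exp (t * b) ≤ 2 * E := by
    nlinarith [split]
  have := mul_le_mul_of_nonneg_right total (Real.exp_pos (-(t*b))).le
  rw [mul_assoc, ← Real.exp_add] at this
  simp only [add_neg_cancel, Real.exp_zero, mul_one] at this
  calc ((Finset.univ.filter (fun f : Z → Bool => b ≤ |X f|)).card : ℝ)
      ≤ 2 * E * Real.exp (-(t * b)) := this
    _ = 2 * Real.exp (-(t * b)) * E := by ring

lemma exists_good_f (n M : ℕ) (δ t : ℝ) (ht : 0 ≤ t) (hMn : M ≤ 2 ^ n)
    (hlt : (((2 ^ n).choose M : ℝ)) ^ 2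
        * (2 * Real.exp (-(t * (δ * (M:ℝ) ^ 2))) * (Real.exp t + Real.exp (-t)) ^ (M ^ 2))
      < 2 ^ (M ^ 2)) :
    ∃ f : BS n × BS n → Bool, ∀ S T : Finset (BS n), S.card = M → T.card = M →
      |∑ x ∈ S, ∑ y ∈ T, sgn (f (x, y))| ≤ δ * (M:ℝ) ^ 2 := by
  classical
  by_contra hcon
  push_neg at hcon
  set Q := Fintype.card (BS n × BS n) with hQ
  have hcardBS : Fintype.card (BS n) = 2 ^ n := by simp [Fintype.card_fun]
  have hQval : Q = 2 ^ n * 2 ^ n := by simp [hQ, hcardBS]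
  have hM2Q : M ^ 2 ≤ Q := by
    rw [hQval, pow_two]
    exact Nat.mul_le_mul hMn hMn
  set pairs : Finset (Finset (BS n) × Finset (BS n)) :=
    (Finset.powersetCard M Finset.univ) ×ˢ (Finset.powersetCard M Finset.univ) with hpairs
  set bad : Finset (BS n) × Finset (BS n) → Finset (BS n × BS n → Bool) :=
    fun ST => Finset.univ.filter
      (fun f => δ * (M:ℝ) ^ 2 ≤ |∑ z ∈ ST.1 ×ˢ ST.2, sgn (f z)|) with hbad
  have cover : (Finset.univ : Finset (BS n × BS n → Bool)) ⊆ pairs.biUnion bad := by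
    intro f _
    obtain ⟨S, T, hS, hT, hgt⟩ := hcon f
    rw [Finset.mem_biUnion]
    refine ⟨(S, T), ?_, ?_⟩
    · rw [hpairs, Finset.mem_product]
      exact ⟨Finset.mem_powersetCard_univ.mpr hS, Finset.mem_powersetCard_univ.mpr hT⟩
    · rw [hbad, Finset.mem_filter]
      refine ⟨Finset.mem_univ f, ?_⟩
      rw [Finset.sum_product]
      exact hgt.le
  have cards : (2:ℝ) ^ Q ≤ (pairs.card : ℝ) *
      (2 * Real.exp (-(t * (δ * (M:ℝ) ^ 2))) * ((Real.exp t + Real.exp (-t)) ^ (M ^ 2)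
        * 2 ^ (Q - M ^ 2))) := by
    have h0 : Fintype.card (BS n × BS n → Bool) = 2 ^ Q := by
      simp [Fintype.card_fun, hQ]
    calc (2:ℝ) ^ Q = ((Finset.univ : Finset (BS n × BS n → Bool)).card : ℝ) := by
          rw [Finset.card_univ, h0]; push_cast; ring
      _ ≤ ((pairs.biUnion bad).card : ℝ) := by
          exact_mod_cast Nat.cast_le.mpr (Finset.card_le_card cover)
      _ ≤ ∑ ST ∈ pairs, ((bad ST).card : ℝ) := by
          rw [← Nat.cast_sum]
          exact_mod_cast Finset.card_biUnion_le
      _ ≤ ∑ _ST ∈ pairs, (2 * Real.exp (-(t * (δ * (M:ℝ) ^ 2)))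
            * ((Real.exp t + Real.exp (-t)) ^ (M ^ 2) * 2 ^ (Q - M ^ 2))) := by
          apply Finset.sum_le_sum
          intro ST hST
          rw [hpairs, Finset.mem_product] at hST
          have hS := (Finset.mem_powersetCard_univ.mp hST.1)
          have hT := (Finset.mem_powersetCard_univ.mp hST.2)
          have hA : (ST.1 ×ˢ ST.2).card = M ^ 2 := by
            rw [Finset.card_product, hS, hT, pow_two]
          have := count_bad (ST.1 ×ˢ ST.2) t (δ * (M:ℝ) ^ 2) ht
          rw [hA] at this
          exact this
      _ = (pairs.card : ℝ) * (2 * Real.exp (-(t * (δ * (M:ℝ) ^ 2)))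
            * ((Real.exp t + Real.exp (-t)) ^ (M ^ 2) * 2 ^ (Q - M ^ 2))) := by
          rw [Finset.sum_const, nsmul_eq_mul]
  have hpairscard : (pairs.card : ℝ) = (((2 ^ n).choose M : ℝ)) ^ 2 := by
    rw [hpairs, Finset.card_product, Finset.card_powersetCard, Finset.card_univ, hcardBS]
    push_cast
    ring
  rw [hpairscard] at cards
  have hsplit : (2:ℝ) ^ Q = 2 ^ (M ^ 2) * 2 ^ (Q - M ^ 2) := by
    rw [← pow_add]
    congr 1
    omega
  have hpow : (0:ℝ) < 2 ^ (Q - M ^ 2) := by positivity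
  nlinarith [cards, hlt, hpow, hsplit]

lemma statDist_eval {n : ℕ} (f : BS n × BS n → Bool) (p : BS n × BS n → ℝ)
    (hp : ∑ z, p z = 1) :
    statDist (distMap (fun z : BS n × BS n => (fun _ : Fin 1 => f z : BS 1)) p)
        (unifDist (BS 1))
      = |∑ z, p z * sgn (f z)| / 2 := by
  classical
  have hcard : (Fintype.card (BS 1) : ℝ) = 2 := by simp [Fintype.card_fun]
  set q := distMap (fun z : BS n × BS n => (fun _ : Fin 1 => f z : BS 1)) p with hq
  have hfilter : ∀ b : Bool, (Finset.univ.filter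
      (fun z : BS n × BS n => (fun _ : Fin 1 => f z) = (fun _ : Fin 1 => b)))
      = Finset.univ.filter (fun z => f z = b) := by
    intro b
    apply Finset.filter_congr
    intro z _
    simp [funext_iff]
  have hqb : ∀ b : Bool, q (fun _ => b) = ∑ z ∈ Finset.univ.filter (fun z => f z = b), p z := by
    intro b
    rw [hq]
    show ∑ z ∈ Finset.univ.filter _, p z = _
    rw [hfilter b]
  set st := ∑ z ∈ Finset.univ.filter (fun z => f z = true), p z with hst
  set sf := ∑ z ∈ Finset.univ.filter (fun z => f z = false), p z with hsf
  have hsum : st + sf = 1 := by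
    rw [hst, hsf, ← hp]
    rw [← Finset.sum_filter_add_sum_filter_not Finset.univ (fun z => f z = true) p]
    congr 1
    apply Finset.sum_congr _ (fun _ _ => rfl)
    ext z
    simp
  have hchi : ∑ z, p z * sgn (f z) = st - sf := by
    rw [hst, hsf,
      ← Finset.sum_filter_add_sum_filter_not Finset.univ (fun z => f z = true)
        (fun z => p z * sgn (f z))]
    have e1 : ∑ z ∈ Finset.univ.filter (fun z => f z = true), p z * sgn (f z)
        = ∑ z ∈ Finset.univ.filter (fun z => f z = true), p z := by
      apply Finset.sum_congr rfl
      intro z hz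
      rw [(Finset.mem_filter.mp hz).2]
      simp [sgn]
    have e2 : ∑ z ∈ Finset.univ.filter (fun z => ¬(f z = true)), p z * sgn (f z)
        = -∑ z ∈ Finset.univ.filter (fun z => f z = false), p z := by
      rw [← Finset.sum_neg_distrib]
      apply Finset.sum_congr
      · ext z; simp
      · intro z hz
        have : f z = false := by simpa using (Finset.mem_filter.mp hz).2
        rw [this]
        simp [sgn]
    rw [e1, e2]
    ring
  have hsd : statDist q (unifDist (BS 1)) = (|st - 2⁻¹| + |sf - 2⁻¹|) / 2 := by
    unfold statDist unifDist
    rw [hcard]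
    congr 1
    rw [← Equiv.sum_comp (Equiv.funUnique (Fin 1) Bool).symm
      (fun x : BS 1 => |q x - 2⁻¹|), Fintype.sum_bool]
    have ht' : (Equiv.funUnique (Fin 1) Bool).symm true = (fun _ => true : BS 1) := rfl
    have hf' : (Equiv.funUnique (Fin 1) Bool).symm false = (fun _ => false : BS 1) := rfl
    rw [ht', hf', hqb true, hqb false, ← hst, ← hsf]
  rw [hsd, hchi]
  have h1 : sf - 2⁻¹ = -(st - 2⁻¹) := by linarith
  have h2 : st - sf = 2 * (st - 2⁻¹) := by linarith
  rw [h1, h2, abs_neg, abs_mul]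
  norm_num

lemma bias_le {n M : ℕ} (hM : 0 < M) (hcard : M ≤ 2 ^ n) (f : BS n × BS n → Bool) (δ : ℝ)
    (hgood : ∀ S T : Finset (BS n), S.card = M → T.card = M →
      |∑ x ∈ S, ∑ y ∈ T, sgn (f (x, y))| ≤ δ * (M:ℝ) ^ 2)
    (pX pY : BS n → ℝ) (hX : IsDist pX) (hY : IsDist pY)
    (hbX : ∀ x, pX x ≤ (M:ℝ)⁻¹) (hbY : ∀ y, pY y ≤ (M:ℝ)⁻¹) :
    |∑ z : BS n × BS n, distProd pX pY z * sgn (f z)| ≤ δ := by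
  classical
  have hM0 : (M:ℝ) ≠ 0 := Nat.cast_ne_zero.mpr hM.ne'
  have hcard' : M ≤ Fintype.card (BS n) := by simpa [Fintype.card_fun] using hcard
  set g : BS n → ℝ := fun x => ∑ y, pY y * sgn (f (x, y)) with hg
  have hrw : ∑ z : BS n × BS n, distProd pX pY z * sgn (f z) = ∑ x, pX x * g x := by
    rw [Fintype.sum_prod_type]
    apply Finset.sum_congr rfl
    intro x _
    rw [hg, Finset.mul_sum]
    apply Finset.sum_congr rfl
    intro y _
    simp [distProd]
    ring
  have hBout : ∀ S : Finset (BS n), S.card = M → |∑ x ∈ S, g x| ≤ δ * M := by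
    intro S hS
    set h : BS n → ℝ := fun y => ∑ x ∈ S, sgn (f (x, y)) with hh
    have hswap : ∑ x ∈ S, g x = ∑ y, pY y * h y := by
      rw [hg, hh]
      rw [Finset.sum_comm]
      apply Finset.sum_congr rfl
      intro y _
      rw [Finset.mul_sum]
    have hBin : ∀ T : Finset (BS n), T.card = M → |∑ y ∈ T, h y| ≤ δ * (M:ℝ) ^ 2 := by
      intro T hT
      have := hgood S T hS hT
      rw [Finset.sum_comm] at this
      exact this
    have := extremal_abs pY h M hM hcard' hY.1 hY.2 hbY (δ * (M:ℝ) ^ 2) hBin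
    rw [hswap]
    calc |∑ y, pY y * h y| ≤ δ * (M:ℝ) ^ 2 / M := this
      _ = δ * M := by field_simp
  have := extremal_abs pX g M hM hcard' hX.1 hX.2 hbX (δ * M) hBout
  rw [hrw]
  calc |∑ x, pX x * g x| ≤ δ * M / M := this
    _ = δ := by field_simp

lemma exp_key (n M : ℕ) (δ : ℝ) (hδ0 : 0 < δ)
    (hn1 : 1 ≤ n) (hM1 : 1 ≤ M) (hMn2 : n ^ 2 ≤ M) (hδn : 18 ≤ δ ^ 2 * n) :
    (2:ℝ) ^ (2 * (n * M) + 1) < Real.exp ((δ/3) * δ * (M:ℝ) ^ 2 / 2) := by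
  have h2 : Real.exp (((2 * (n * M) + 1 : ℕ) : ℝ) * Real.log 2) = 2 ^ (2 * (n * M) + 1) := by
    rw [Real.exp_nat_mul, Real.exp_log (by norm_num : (0:ℝ) < 2)]
  rw [← h2]
  apply Real.exp_lt_exp.mpr
  have hlog2 : Real.log 2 < 1 := by
    have := Real.log_lt_sub_one_of_pos (show (0:ℝ) < 2 by norm_num) (by norm_num)
    linarith
  have hn0 : (1:ℝ) ≤ (n:ℝ) := by exact_mod_cast hn1
  have hM0 : (1:ℝ) ≤ (M:ℝ) := by exact_mod_cast hM1
  have hnm : (1:ℝ) ≤ (n:ℝ) * M := by nlinarith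
  have hcast : ((2 * (n * M) + 1 : ℕ) : ℝ) = 2 * ((n:ℝ) * M) + 1 := by push_cast; ring
  rw [hcast]
  have step1 : (2 * ((n:ℝ) * M) + 1) * Real.log 2 < 3 * ((n:ℝ) * M) := by
    nlinarith [Real.log_two_gt_d9]
  have step2 : 3 * ((n:ℝ) * M) ≤ (δ/3) * δ * (M:ℝ) ^ 2 / 2 := by
    have hM' : ((n:ℝ))^2 ≤ (M:ℝ) := by exact_mod_cast hMn2
    have h18 : 18 * ((n:ℝ) * M) ≤ δ ^ 2 * (M:ℝ) ^ 2 := by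
      calc 18 * ((n:ℝ) * M) ≤ (δ ^ 2 * n) * ((n:ℝ) * M) := by
            nlinarith [mul_le_mul_of_nonneg_right hδn (by positivity : (0:ℝ) ≤ (n:ℝ) * M)]
        _ = δ ^ 2 * ((n:ℝ)^2 * M) := by ring
        _ ≤ δ ^ 2 * ((M:ℝ) * M) := by
            apply mul_le_mul_of_nonneg_left _ (by positivity)
            nlinarith
        _ = δ ^ 2 * (M:ℝ) ^ 2 := by ring
    nlinarith
  linarith

lemma numeric_final (n M : ℕ) (δ : ℝ) (hδ0 : 0 < δ) (hδ1 : δ ≤ 1)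
    (hn1 : 1 ≤ n) (hM1 : 1 ≤ M) (hMn2 : n ^ 2 ≤ M) (hδn : 18 ≤ δ ^ 2 * n) :
    (((2 ^ n).choose M : ℝ)) ^ 2
        * (2 * Real.exp (-((δ/3) * (δ * (M:ℝ) ^ 2)))
          * (Real.exp (δ/3) + Real.exp (-(δ/3))) ^ (M ^ 2))
      < 2 ^ (M ^ 2) := by
  have ht0 : 0 < δ / 3 := by positivity
  have hchoose : (((2 ^ n).choose M : ℝ)) ≤ 2 ^ (n * M) := by
    calc (((2 ^ n).choose M : ℝ)) ≤ ((2 ^ n : ℕ) : ℝ) ^ M := by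
          exact_mod_cast Nat.choose_le_pow (2 ^ n) M
      _ = 2 ^ (n * M) := by push_cast; rw [← pow_mul]
  have hchoose0 : (0:ℝ) ≤ ((2 ^ n).choose M : ℝ) := Nat.cast_nonneg _
  have hcosh : Real.exp (δ/3) + Real.exp (-(δ/3)) ≤ 2 * Real.exp ((δ/3) * δ / 2) := by
    refine (cosh_aux (δ/3) ht0.le).trans ?_
    have het : Real.exp (δ/3) ≤ 3 := by
      calc Real.exp (δ/3) ≤ Real.exp 1 := Real.exp_le_exp.mpr (by linarith)
        _ ≤ 3 := by linarith [Real.exp_one_lt_d9]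
    have : (δ/3) ^ 2 * Real.exp (δ/3) / 2 ≤ (δ/3) * δ / 2 := by
      have h1 : (δ/3) * Real.exp (δ/3) ≤ δ := by
        calc (δ/3) * Real.exp (δ/3) ≤ (δ/3) * 3 := by nlinarith
          _ = δ := by ring
      nlinarith
    nlinarith [Real.exp_le_exp.mpr this, Real.exp_pos ((δ/3)^2 * Real.exp (δ/3) / 2)]
  have hpow : (Real.exp (δ/3) + Real.exp (-(δ/3))) ^ (M ^ 2)
      ≤ 2 ^ (M ^ 2) * Real.exp (((M ^ 2 : ℕ) : ℝ) * ((δ/3) * δ / 2)) := by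
    calc (Real.exp (δ/3) + Real.exp (-(δ/3))) ^ (M ^ 2) ≤ (2 * Real.exp ((δ/3) * δ / 2)) ^ (M ^ 2) := by
          apply pow_le_pow_left₀ (by positivity) hcosh
      _ = 2 ^ (M ^ 2) * Real.exp (((M ^ 2 : ℕ) : ℝ) * ((δ/3) * δ / 2)) := by
          rw [mul_pow, ← Real.exp_nat_mul]
  have hexp_key := exp_key n M δ hδ0 hn1 hM1 hMn2 hδn
  have e1 : (((2 ^ n).choose M : ℝ)) ^ 2 ≤ ((2:ℝ) ^ (n * M)) ^ 2 :=
    pow_le_pow_left₀ hchoose0 hchoose 2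
  have e2 : ((2:ℝ) ^ (n * M)) ^ 2 = 2 ^ (2 * (n * M)) := by
    rw [← pow_mul, Nat.mul_comm]
  have hAB : Real.exp (-((δ/3) * (δ * (M:ℝ) ^ 2))) * Real.exp (((M ^ 2 : ℕ) : ℝ) * ((δ/3) * δ / 2))
      = Real.exp (-((δ/3) * δ * (M:ℝ) ^ 2 / 2)) := by
    rw [← Real.exp_add]
    congr 1
    push_cast
    ring
  calc (((2 ^ n).choose M : ℝ)) ^ 2
        * (2 * Real.exp (-((δ/3) * (δ * (M:ℝ) ^ 2))) * (Real.exp (δ/3) + Real.exp (-(δ/3))) ^ (M ^ 2))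
      ≤ ((2:ℝ) ^ (n * M)) ^ 2
        * (2 * Real.exp (-((δ/3) * (δ * (M:ℝ) ^ 2)))
          * (2 ^ (M ^ 2) * Real.exp (((M ^ 2 : ℕ) : ℝ) * ((δ/3) * δ / 2)))) := by
        apply mul_le_mul e1 _ (by positivity) (by positivity)
        apply mul_le_mul_of_nonneg_left hpow (by positivity)
    _ = 2 ^ (M ^ 2) * ((2:ℝ) ^ (2 * (n * M) + 1)
          * Real.exp (-((δ/3) * δ * (M:ℝ) ^ 2 / 2))) := by
        rw [e2, ← hAB, pow_succ]
        ring
    _ < 2 ^ (M ^ 2) * 1 := by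
        apply mul_lt_mul_of_pos_left _ (by positivity)
        have hpos := Real.exp_pos (-((δ/3) * δ * (M:ℝ) ^ 2 / 2))
        have := mul_lt_mul_of_pos_right hexp_key hpos
        rw [← Real.exp_add] at this
        simpa using this
    _ = 2 ^ (M ^ 2) := mul_one _

lemma logb24 : Real.logb 2 4 = 2 := by
  rw [show (4:ℝ) = 2^(2:ℕ) by norm_num, Real.logb_pow, Real.logb_self_eq_one] <;> norm_num


lemma k_bounds (n : ℕ) (hn : 17000 ≤ n) :
    ⌈(2:ℝ) * Real.logb 2 n * Real.logb 2 (Real.logb 2 n)⌉₊ ≤ n ∧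
    n ^ 2 ≤ 2 ^ ⌈(2:ℝ) * Real.logb 2 n * Real.logb 2 (Real.logb 2 n)⌉₊ := by
  have hnR : (17000:ℝ) ≤ (n:ℝ) := by exact_mod_cast hn
  have hn0 : (0:ℝ) < n := by linarith
  set L := Real.logb 2 n with hL
  set LL := Real.logb 2 L with hLL
  have h12 : (1:ℝ) < 2 := one_lt_two
  have hL2 : (2:ℝ) ≤ L := by
    have h := Real.logb_le_logb_of_le (x := 4) (y := (n:ℝ)) one_lt_two (by norm_num) (by linarith)
    rw [logb24] at h
    exact h
  have hLpos : (0:ℝ) < L := by linarith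
  have hLL1 : (1:ℝ) ≤ LL := by
    have h := Real.logb_le_logb_of_le (x := 2) (y := L) one_lt_two two_pos hL2
    rw [Real.logb_self_eq_one one_lt_two] at h
    exact h
  set s := Real.sqrt (Real.sqrt (n:ℝ)) with hs
  have hsqn0 : (0:ℝ) ≤ Real.sqrt n := Real.sqrt_nonneg _
  have hs0 : (0:ℝ) ≤ s := Real.sqrt_nonneg _
  have hsq : Real.sqrt (n:ℝ) * Real.sqrt (n:ℝ) = n := Real.mul_self_sqrt hn0.le
  have hs2 : s * s = Real.sqrt (n:ℝ) := Real.mul_self_sqrt hsqn0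
  have hsn : (130:ℝ) ≤ Real.sqrt n := by
    rw [show (130:ℝ) = Real.sqrt (130^2) by rw [Real.sqrt_sq] ; norm_num]
    apply Real.sqrt_le_sqrt
    norm_num
    linarith
  have hspos : (0:ℝ) < s := by nlinarith
  have hlogn : Real.log n ≤ 4 * s := by
    have e1 : Real.log s = Real.log n / 4 := by
      rw [hs, Real.log_sqrt hsqn0, Real.log_sqrt hn0.le]
      ring
    have e2 : Real.log s ≤ s - 1 := Real.log_le_sub_one_of_pos hspos
    nlinarith
  have hlog2 : (1/2 : ℝ) ≤ Real.log 2 := by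
    have := Real.log_two_gt_d9
    linarith
  have hlog2pos : (0:ℝ) < Real.log 2 := by linarith
  have hL8 : L ≤ 8 * s := by
    rw [hL, Real.logb, div_le_iff₀ hlog2pos]
    nlinarith
  have hLn : L ≤ (n:ℝ) := by
    have h8n : 8 * s ≤ (n:ℝ) := by nlinarith
    linarith
  have hLLleL : LL ≤ L := by
    rw [hLL, hL]
    calc Real.logb 2 L ≤ Real.logb 2 (n:ℝ) := Real.logb_le_logb_of_le one_lt_two hLpos hLn
      _ = L := hL.symm
  constructor
  · rw [Nat.ceil_le]
    have step : 2 * L * LL ≤ 2 * L * L := by nlinarith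
    have step2 : 2 * L * L ≤ 128 * Real.sqrt n := by nlinarith
    have step3 : (128:ℝ) * Real.sqrt n ≤ n := by nlinarith
    linarith
  · have hk : (2:ℝ) * L ≤ (⌈2 * L * LL⌉₊ : ℝ) := by
      calc (2:ℝ) * L ≤ 2 * L * LL := by nlinarith
        _ ≤ _ := Nat.le_ceil _
    have cast1 : ((2 ^ ⌈(2:ℝ) * L * LL⌉₊ : ℕ) : ℝ) = (2:ℝ) ^ ((⌈(2:ℝ) * L * LL⌉₊ : ℕ) : ℝ) := by
      rw [Real.rpow_natCast]
      push_cast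
      ring
    have main : ((n:ℝ)) ^ (2:ℕ) ≤ (2:ℝ) ^ ((⌈(2:ℝ) * L * LL⌉₊ : ℕ) : ℝ) := by
      have r1 : (2:ℝ) ^ ((2:ℝ) * L) ≤ (2:ℝ) ^ ((⌈(2:ℝ) * L * LL⌉₊ : ℕ) : ℝ) := by
        apply Real.rpow_le_rpow_of_exponent_le (by norm_num) hk
      have r2 : (2:ℝ) ^ ((2:ℝ) * L) = ((2:ℝ) ^ L) ^ (2:ℕ) := by
        rw [← Real.rpow_natCast ((2:ℝ) ^ L) 2, ← Real.rpow_mul (by norm_num : (0:ℝ) ≤ 2)]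
        norm_num
        rw [mul_comm]
      have r3 : (2:ℝ) ^ L = (n:ℝ) := by
        rw [hL]
        exact Real.rpow_logb (by norm_num) (by norm_num) hn0
      rw [← r3, ← r2]
      exact r1
    rw [← Nat.cast_le (α := ℝ)]
    push_cast
    calc ((n:ℝ))^2 ≤ _ := main
      _ = _ := by rw [← cast1]; push_cast; ring


theorem stmt1 :
    ∀ ε : ℝ, ε > 0 →
      ∃ c : ℝ, c > 1 ∧ ∃ N : ℕ, ∀ n : ℕ, n ≥ N →
        ∃ ext : BS n → BS n → BS 1,
          IsTwoSourceExt ext (⌈c * logb 2 n * logb 2 (logb 2 n)⌉₊ : ℝ) ε := by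
  intro ε hε
  refine ⟨2, by norm_num, ?_⟩
  set δ : ℝ := min (2 * ε) 1 with hδdef
  have hδ0 : 0 < δ := lt_min (by linarith) one_pos
  have hδ1 : δ ≤ 1 := min_le_right _ _
  have hδε : δ ≤ 2 * ε := min_le_left _ _
  refine ⟨17000 + ⌈18 / δ ^ 2⌉₊, ?_⟩
  intro n hn
  have hn17 : 17000 ≤ n := le_trans (Nat.le_add_right _ _) hn
  have hδn : 18 ≤ δ ^ 2 * n := by
    have h1 : (⌈18 / δ ^ 2⌉₊ : ℝ) ≤ n := by
      have : ⌈18/δ^2⌉₊ ≤ n := le_trans (Nat.le_add_left _ _) hn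
      exact_mod_cast this
    have h2 : 18 / δ ^ 2 ≤ (n:ℝ) := le_trans (Nat.le_ceil _) h1
    have h3 := mul_le_mul_of_nonneg_right h2 (by positivity : (0:ℝ) ≤ δ ^ 2)
    calc (18:ℝ) = 18 / δ ^ 2 * δ ^ 2 := by field_simp
      _ ≤ (n:ℝ) * δ ^ 2 := h3
      _ = δ ^ 2 * n := by ring
  obtain ⟨hkn, hn2M⟩ := k_bounds n hn17
  set k : ℕ := ⌈(2:ℝ) * Real.logb 2 n * Real.logb 2 (Real.logb 2 n)⌉₊ with hk
  set M : ℕ := 2 ^ k with hM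
  have hMpos : 0 < M := Nat.pow_pos (by norm_num)
  have hM1 : 1 ≤ M := hMpos
  have hn1 : 1 ≤ n := by omega
  have hMle : M ≤ 2 ^ n := Nat.pow_le_pow_right (by norm_num) hkn
  have hnum := numeric_final n M δ hδ0 hδ1 hn1 hM1 hn2M hδn
  obtain ⟨f, hf⟩ := exists_good_f n M δ (δ/3) (by positivity) hMle hnum
  refine ⟨fun x y => fun _ => f (x, y), ?_⟩
  intro pX pY hdX hdY hmX hmY
  have h2k : (2:ℝ) ^ (-((k:ℕ):ℝ)) = (M:ℝ)⁻¹ := by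
    rw [Real.rpow_neg (by norm_num : (0:ℝ) ≤ 2), Real.rpow_natCast]
    rw [hM]
    push_cast
    ring_nf
  have hbX : ∀ x, pX x ≤ (M:ℝ)⁻¹ := fun x => (hmX x).trans_eq h2k
  have hbY : ∀ y, pY y ≤ (M:ℝ)⁻¹ := fun y => (hmY y).trans_eq h2k
  have hsum1 : ∑ z : BS n × BS n, distProd pX pY z = 1 := by
    have : ∑ z : BS n × BS n, distProd pX pY z = (∑ x, pX x) * (∑ y, pY y) := by
      rw [Finset.sum_mul_sum, Fintype.sum_prod_type]
      rfl
    rw [this, hdX.2, hdY.2, mul_one]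
  have hbias := bias_le hMpos hMle (fun z : BS n × BS n => f (z.1, z.2)) δ
      (fun S T hS hT => hf S T hS hT) pX pY hdX hdY hbX hbY
  have heval := statDist_eval (fun z : BS n × BS n => f (z.1, z.2)) (distProd pX pY) hsum1
  exact heval.trans_le (by
    rw [div_le_iff₀ (by norm_num : (0:ℝ) < 2)]
    calc |∑ z : BS n × BS n, distProd pX pY z * sgn (f (z.1, z.2))| ≤ δ := hbias
      _ ≤ ε * 2 := by linarith)
end
end

section
/- There exist constants 0 < γ < 1 and c > 0 such that for all sufficiently large n there is a function nmExt : {0,1}^n × {0,1}^n → {0,1}^m with m ≥ c·n that is a seedless non-malleable extractor for two independent sources with min-entropy (1−γ)n and error 2^{−c·n/log n}: for all independent (n,(1−γ)n)-sources X, Y and all tampering functions f, g : {0,1}^n → {0,1}^n such that at least one of f, g has no fixed points, (nmExt(X,Y), nmExt(f(X),g(Y))) ≈_{2^{−c·n/log n}} (U_m, nmExt(f(X),g(Y))). -/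
open Finset Real

noncomputable section

/-- `nmExt` is a seedless non-malleable extractor for two independent sources with
min-entropy `k` and error `ε`. -/
def IsNM2Ext {n m : ℕ} (nmExt : BS n → BS n → BS m) (k ε : ℝ) : Prop :=
  ∀ pX pY : BS n → ℝ, IsDist pX → IsDist pY →
    MinEntropyGE pX k → MinEntropyGE pY k →
      ∀ f g : BS n → BS n, ((∀ x, f x ≠ x) ∨ (∀ y, g y ≠ y)) →
        statDist
          (distMap (fun z : BS n × BS n => (nmExt z.1 z.2, nmExt (f z.1) (g z.2)))
            (distProd pX pY))
          (distProd (unifDist (BS m))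
            (distMap (fun z : BS n × BS n => nmExt (f z.1) (g z.2)) (distProd pX pY)))
        ≤ ε


lemma exp_quad {x : ℝ} (hx : |x| ≤ 1) : Real.exp x ≤ 1 + x + x^2 := by
  have h := Real.exp_bound hx (n := 2) (by norm_num)
  have h2 : (∑ m ∈ Finset.range 2, x ^ m / m.factorial) = 1 + x := by
    simp [Finset.sum_range_succ]
  rw [h2] at h
  have h4 := (abs_sub_le_iff.1 h).1
  have h5 : |x| ^ 2 = x ^ 2 := sq_abs x
  have h6 : ((Nat.succ 2 : ℕ) : ℝ) / ((Nat.factorial 2 : ℕ) * (2:ℕ)) = 3/4 := by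
    norm_num [Nat.factorial]
  rw [h5, h6] at h4
  nlinarith [sq_nonneg x]

lemma sum_pi_prod {ι V : Type*} [Fintype ι] [DecidableEq ι] [Fintype V] (g : ι → V → ℝ) :
    ∑ f : ι → V, ∏ i, g i (f i) = ∏ i, ∑ v, g i v :=
  (Fintype.prod_sum (fun i (v : V) => g i v)).symm

lemma slice_card {β : Type*} [Fintype β] [DecidableEq β] (T : Finset (β × β)) (v : β) :
    (T.filter (fun t => t.2 = v)).card
      = (Finset.univ.filter (fun u : β => (u, v) ∈ T)).card := by
  apply Finset.card_bij (fun t _ => t.1)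
  · rintro ⟨a,b⟩ ht
    simp only [Finset.mem_filter] at ht ⊢
    exact ⟨Finset.mem_univ _, by rcases ht with ⟨h1, h2⟩; simpa [h2] using h1⟩
  · rintro ⟨a,b⟩ ha ⟨a',b'⟩ hb hab
    simp only [Finset.mem_filter] at ha hb
    simp_all [Prod.ext_iff]
  · intro u hu
    simp only [Finset.mem_filter] at hu
    exact ⟨(u, v), Finset.mem_filter.2 ⟨hu.2, rfl⟩, rfl⟩

lemma statDist_le' {α : Type*} [Fintype α] (p q : α → ℝ) (ε : ℝ)
    (hsum : ∑ x, p x = ∑ x, q x)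
    (hT : ∀ T : Finset α, ∑ x ∈ T, (p x - q x) ≤ ε) :
    statDist p q ≤ ε := by
  classical
  set T := Finset.univ.filter (fun x => q x < p x) with hTdef
  have key : ∑ x, |p x - q x| = 2 * ∑ x ∈ T, (p x - q x) := by
    have hsplit : ∑ x, |p x - q x|
        = ∑ x ∈ T, |p x - q x| + ∑ x ∈ Finset.univ.filter (fun x => ¬ q x < p x), |p x - q x| := by
      rw [Finset.sum_filter_add_sum_filter_not]
    have h1 : ∑ x ∈ T, |p x - q x| = ∑ x ∈ T, (p x - q x) := by
      apply Finset.sum_congr rfl; intro x hx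
      rw [abs_of_pos]; simp only [hTdef, Finset.mem_filter] at hx; linarith [hx.2]
    have h2 : ∑ x ∈ Finset.univ.filter (fun x => ¬ q x < p x), |p x - q x|
        = ∑ x ∈ Finset.univ.filter (fun x => ¬ q x < p x), (q x - p x) := by
      apply Finset.sum_congr rfl; intro x hx
      simp only [Finset.mem_filter, not_lt] at hx
      rw [abs_of_nonpos] <;> linarith [hx.2]
    have h3 : ∑ x ∈ T, (p x - q x) + ∑ x ∈ Finset.univ.filter (fun x => ¬ q x < p x), (p x - q x)
        = 0 := by
      rw [Finset.sum_filter_add_sum_filter_not, Finset.sum_sub_distrib, hsum, sub_self]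
    have h4 : ∑ x ∈ Finset.univ.filter (fun x => ¬ q x < p x), (q x - p x)
        = ∑ x ∈ T, (p x - q x) := by
      have : ∑ x ∈ Finset.univ.filter (fun x => ¬ q x < p x), (q x - p x)
          = - ∑ x ∈ Finset.univ.filter (fun x => ¬ q x < p x), (p x - q x) := by
        rw [← Finset.sum_neg_distrib]; apply Finset.sum_congr rfl; intros; ring
      rw [this]; linarith
    rw [hsplit, h1, h2, h4]; ring
  rw [statDist, key]
  linarith [hT T]

lemma exists_topK {α : Type*} [Fintype α] [DecidableEq α] (a : α → ℝ) :
    ∀ K : ℕ, K ≤ Fintype.card α →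
      ∃ A : Finset α, A.card = K ∧ ∀ x ∈ A, ∀ y ∉ A, a y ≤ a x := by
  intro K
  induction K with
  | zero => intro _; exact ⟨∅, rfl, by simp⟩
  | succ K ih =>
    intro hK
    obtain ⟨A, hcard, htop⟩ := ih (Nat.le_of_succ_le hK)
    have hne : (Finset.univ \ A).Nonempty := by
      rw [← Finset.card_pos, Finset.card_sdiff_of_subset (Finset.subset_univ A), Finset.card_univ, hcard]
      omega
    obtain ⟨x₀, hx₀, hmax⟩ := Finset.exists_max_image _ a hne
    have hx₀A : x₀ ∉ A := by simp only [Finset.mem_sdiff] at hx₀; exact hx₀.2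
    refine ⟨insert x₀ A, ?_, ?_⟩
    · rw [Finset.card_insert_of_notMem hx₀A, hcard]
    · intro x hx y hy
      have hyA : y ∉ A := fun h => hy (Finset.mem_insert_of_mem h)
      rcases Finset.mem_insert.1 hx with rfl | hxA
      · exact hmax y (Finset.mem_sdiff.2 ⟨Finset.mem_univ _, hyA⟩)
      · exact htop x hxA y hyA

lemma source_bound {α : Type*} [Fintype α] [DecidableEq α] (p a : α → ℝ)
    (hp0 : ∀ x, 0 ≤ p x) (hp1 : ∑ x, p x = 1) (K : ℕ) (hK1 : 1 ≤ K)
    (hpK : ∀ x, p x ≤ 1 / K) (hKcard : K ≤ Fintype.card α) (G : ℝ)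
    (hG : ∀ A : Finset α, A.card = K → ∑ x ∈ A, a x ≤ G) :
    ∑ x, p x * a x ≤ G / K := by
  classical
  obtain ⟨A, hcard, htop⟩ := exists_topK a K hKcard
  have hAne : A.Nonempty := Finset.card_pos.1 (by omega)
  obtain ⟨xm, hxm, hmin⟩ := Finset.exists_min_image A a hAne
  set t := a xm with ht
  have hKpos : (0:ℝ) < K := by exact_mod_cast hK1
  have step1 : ∑ x, p x * a x = ∑ x, p x * (a x - t) + t := by
    rw [show ∑ x, p x * (a x - t) = ∑ x, (p x * a x - p x * t) by apply Finset.sum_congr rfl; intros; ring,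
       Finset.sum_sub_distrib, ← Finset.sum_mul, hp1]; ring
  have step2 : ∑ x, p x * (a x - t) ≤ ∑ x ∈ A, (1/K) * (a x - t) := by
    rw [← Finset.sum_sdiff (Finset.subset_univ A)]
    have hneg : ∑ x ∈ Finset.univ \ A, p x * (a x - t) ≤ 0 := by
      apply Finset.sum_nonpos; intro x hx
      have hxA : x ∉ A := (Finset.mem_sdiff.1 hx).2
      have : a x ≤ t := htop xm hxm x hxA
      exact mul_nonpos_of_nonneg_of_nonpos (hp0 x) (by linarith)
    have hpos : ∑ x ∈ A, p x * (a x - t) ≤ ∑ x ∈ A, (1/K) * (a x - t) := by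
      apply Finset.sum_le_sum; intro x hx
      have : t ≤ a x := hmin x hx
      exact mul_le_mul_of_nonneg_right (hpK x) (by linarith)
    linarith
  have step3 : ∑ x ∈ A, (1/K) * (a x - t) = (1/K) * ∑ x ∈ A, a x - t := by
    rw [← Finset.mul_sum, show ∑ x ∈ A, (a x - t) = ∑ x ∈ A, a x - A.card * t by
      rw [Finset.sum_sub_distrib, Finset.sum_const, nsmul_eq_mul]]
    rw [hcard]; field_simp
  have step4 : (1/K) * ∑ x ∈ A, a x ≤ (1/K) * G := by
    apply mul_le_mul_of_nonneg_left (hG A hcard); positivity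
  calc ∑ x, p x * a x = ∑ x, p x * (a x - t) + t := step1
    _ ≤ (1/K) * ∑ x ∈ A, a x - t + t := by linarith [step2, step3.le, step3.ge]
    _ ≤ (1/K) * G := by linarith
    _ = G / K := by ring

lemma tricolor_aux {α : Type*} [DecidableEq α] (f : α → α) :
    ∀ s : Finset α, (∀ x ∈ s, f x ≠ x) →
      ∃ c : α → Fin 3, ∀ x ∈ s, f x ∈ s → c (f x) ≠ c x := by
  intro s
  induction s using Finset.strongInduction with
  | _ s ih =>
    intro hfpf
    rcases s.eq_empty_or_nonempty with rfl | hne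
    · exact ⟨fun _ => 0, by simp⟩
    -- degree counting: find z ∈ s with small degree
    have hsum : ∑ z ∈ s, (((s.erase z).filter (fun w => f w = z)).card
        + (if f z ∈ s then 1 else 0)) ≤ 2 * s.card := by
      have h1 : ∑ z ∈ s, ((s.erase z).filter (fun w => f w = z)).card ≤ s.card := by
        calc ∑ z ∈ s, ((s.erase z).filter (fun w => f w = z)).card
            ≤ ∑ z ∈ s, (s.filter (fun w => f w = z)).card := by
              apply Finset.sum_le_sum; intro z _
              exact Finset.card_le_card (Finset.filter_subset_filter _ (Finset.erase_subset _ _))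
          _ = ∑ z ∈ s, ((s.filter (fun w => f w ∈ s)).filter (fun w => f w = z)).card := by
              apply Finset.sum_congr rfl; intro z hz
              congr 1
              ext w
              simp only [Finset.mem_filter, Finset.filter_filter]
              constructor
              · rintro ⟨hw, hfw⟩; exact ⟨hw, by rw [hfw]; exact hz, hfw⟩
              · rintro ⟨hw, _, hfw⟩; exact ⟨hw, hfw⟩
          _ = (s.filter (fun w => f w ∈ s)).card := by
              rw [← Finset.card_eq_sum_card_fiberwise]
              intro x hx
              exact (Finset.mem_filter.1 hx).2
          _ ≤ s.card := Finset.card_le_card (Finset.filter_subset _ _)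
      have h2 : ∑ z ∈ s, (if f z ∈ s then 1 else 0) ≤ s.card := by
        calc ∑ z ∈ s, (if f z ∈ s then 1 else 0) ≤ ∑ z ∈ s, 1 := by
              apply Finset.sum_le_sum; intro z _; split <;> omega
          _ = s.card := by simp
      rw [Finset.sum_add_distrib]; omega
    have hex : ∃ z ∈ s, (((s.erase z).filter (fun w => f w = z)).card
        + (if f z ∈ s then 1 else 0)) ≤ 2 := by
      by_contra hcon
      push_neg at hcon
      have : ∑ z ∈ s, 3 ≤ ∑ z ∈ s, (((s.erase z).filter (fun w => f w = z)).card
          + (if f z ∈ s then 1 else 0)) := by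
        apply Finset.sum_le_sum; intro z hz; exact hcon z hz
      simp only [Finset.sum_const, smul_eq_mul] at this
      have hpos : 0 < s.card := Finset.card_pos.2 hne
      omega
    obtain ⟨z, hz, hdeg⟩ := hex
    set s' := s.erase z with hs'
    obtain ⟨c', hc'⟩ := ih s' (Finset.erase_ssubset hz)
      (fun x hx => hfpf x (Finset.mem_of_mem_erase hx))
    -- forbidden colors
    set F : Finset (Fin 3) := ((s'.filter (fun w => f w = z)).image c')
        ∪ (if f z ∈ s then {c' (f z)} else ∅) with hF
    have hFcard : F.card ≤ 2 := by
      calc F.card ≤ ((s'.filter (fun w => f w = z)).image c').card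
          + (if f z ∈ s then ({c' (f z)} : Finset (Fin 3)) else ∅).card :=
            Finset.card_union_le _ _
        _ ≤ (s'.filter (fun w => f w = z)).card + (if f z ∈ s then 1 else 0) := by
            gcongr
            · exact Finset.card_image_le
            · split <;> simp
        _ ≤ 2 := hdeg
    have hν : ∃ ν : Fin 3, ν ∉ F := by
      by_contra hcon
      push_neg at hcon
      have : (Finset.univ : Finset (Fin 3)) ⊆ F := fun ν _ => hcon ν
      have := Finset.card_le_card this
      simp at this
      omega
    obtain ⟨ν, hν⟩ := hν
    refine ⟨Function.update c' z ν, ?_⟩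
    intro x hx hfx
    have hfxx : f x ≠ x := hfpf x hx
    by_cases hxz : x = z
    · subst hxz
      have hfz : f x ∈ s' := Finset.mem_erase.2 ⟨hfxx, hfx⟩
      rw [Function.update_of_ne hfxx, Function.update_self]
      intro hcontra
      apply hν
      rw [hF]
      apply Finset.mem_union_right
      rw [if_pos hfx]
      simp [hcontra]
    · by_cases hfxz : f x = z
      · rw [hfxz, Function.update_self, Function.update_of_ne hxz]
        intro hcontra
        apply hν
        rw [hF]
        apply Finset.mem_union_left
        rw [hcontra]
        exact Finset.mem_image_of_mem c'
          (Finset.mem_filter.2 ⟨Finset.mem_erase.2 ⟨hxz, hx⟩, hfxz⟩)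
      · rw [Function.update_of_ne hfxz, Function.update_of_ne hxz]
        exact hc' x (Finset.mem_erase.2 ⟨hxz, hx⟩) (Finset.mem_erase.2 ⟨hfxz, hfx⟩)

lemma exists_tricolor {α : Type*} [Fintype α] [DecidableEq α] (f : α → α)
    (hf : ∀ x, f x ≠ x) : ∃ c : α → Fin 3, ∀ x, c (f x) ≠ c x := by
  obtain ⟨c, hc⟩ := tricolor_aux f Finset.univ (fun x _ => hf x)
  exact ⟨c, fun x => hc x (Finset.mem_univ x) (Finset.mem_univ _)⟩

lemma hoeffding_count {P V : Type*} [Fintype P] [DecidableEq P] [Fintype V] [DecidableEq V]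
    (φ : P → P) (Cc : P → Fin 3) (hC : ∀ p, Cc (φ p) ≠ Cc p)
    (i : Fin 3) (W : Finset P) (hW : ∀ w ∈ W, Cc w = i)
    (h : V → V → ℝ) (hh1 : ∀ u v, |h u v| ≤ 1) (hh0 : ∀ v, ∑ u, h u v = 0)
    (t s : ℝ) (ht0 : 0 ≤ t) (ht1 : t ≤ 1) :
    ((Finset.univ.filter (fun ω : P → V => s ≤ ∑ w ∈ W, h (ω w) (ω (φ w)))).card : ℝ)
      ≤ (Fintype.card (P → V) : ℝ) * (1 + t^2) ^ W.card * Real.exp (-(t * s)) := by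
  classical
  set σ : P → Prop := fun p => Cc p = i with hσdef
  have hnσ : ∀ q : {p // σ p}, ¬ σ (φ q.1) := fun q hcon => hC q.1 (hcon.trans q.2.symm)
  set g : ({p // ¬ σ p} → V) → {p // σ p} → V → ℝ :=
    fun ω₂ q v => if q.1 ∈ W then Real.exp (t * h v (ω₂ ⟨φ q.1, hnσ q⟩)) else 1 with hgdef
  -- key bound on the exponential moment
  have key : ∑ ω : P → V, ∏ w ∈ W, Real.exp (t * h (ω w) (ω (φ w)))
      ≤ (Fintype.card (P → V) : ℝ) * (1 + t^2) ^ W.card := by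
    set F : (P → V) → ℝ := fun ω => ∏ w ∈ W, Real.exp (t * h (ω w) (ω (φ w))) with hFdef
    let e := Equiv.piEquivPiSubtypeProd σ (fun _ => V)
    have hsum : ∑ ω : P → V, F ω
        = ∑ z : ({p // σ p} → V) × ({p // ¬ σ p} → V), F (e.symm z) :=
      (Equiv.sum_comp e.symm F).symm
    have hFv : ∀ (ω₁ : {p // σ p} → V) (ω₂ : {p // ¬ σ p} → V),
        F (e.symm (ω₁, ω₂)) = ∏ q : {p // σ p}, g ω₂ q (ω₁ q) := by
      intro ω₁ ω₂
      have hrhs : ∏ q : {p // σ p}, g ω₂ q (ω₁ q)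
          = ∏ q ∈ Finset.univ.filter (fun q : {p // σ p} => q.1 ∈ W),
              Real.exp (t * h (ω₁ q) (ω₂ ⟨φ q.1, hnσ q⟩)) := by
        rw [Finset.prod_filter]
      rw [hrhs]
      simp only [hFdef]
      refine Finset.prod_bij' (fun w hw => (⟨w, hW w hw⟩ : {p // σ p}))
        (fun q _ => q.1) ?_ ?_ ?_ ?_ ?_
      · intro w hw; exact Finset.mem_filter.2 ⟨Finset.mem_univ _, hw⟩
      · intro q hq; exact (Finset.mem_filter.1 hq).2
      · intro w hw; rfl
      · intro q hq; rfl
      · intro w hw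
        have h1 : e.symm (ω₁, ω₂) w = ω₁ ⟨w, hW w hw⟩ := by
          simp only [e, Equiv.piEquivPiSubtypeProd_symm_apply,
            dif_pos (show σ w from hW w hw)]
        have h2 : e.symm (ω₁, ω₂) (φ w) = ω₂ ⟨φ w, hnσ (⟨w, hW w hw⟩ : {p // σ p})⟩ := by
          simp only [e, Equiv.piEquivPiSubtypeProd_symm_apply,
            dif_neg (hnσ (⟨w, hW w hw⟩ : {p // σ p}))]
        rw [h1, h2]
    have hinner : ∀ ω₂ : {p // ¬ σ p} → V,
        ∑ ω₁ : {p // σ p} → V, ∏ q : {p // σ p}, g ω₂ q (ω₁ q)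
          ≤ (Fintype.card ({p // σ p} → V) : ℝ) * (1 + t^2) ^ W.card := by
      intro ω₂
      rw [sum_pi_prod]
      have hfactor : ∀ q : {p // σ p}, ∑ v, g ω₂ q v
          ≤ (Fintype.card V : ℝ) * (if q.1 ∈ W then (1 + t^2) else 1) := by
        intro q
        by_cases hq : q.1 ∈ W
        · simp only [hgdef, if_pos hq]
          set c := ω₂ ⟨φ q.1, hnσ q⟩
          calc ∑ v, Real.exp (t * h v c)
              ≤ ∑ v, (1 + t * h v c + (t * h v c)^2) := by
                apply Finset.sum_le_sum; intro v _
                apply exp_quad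
                rw [abs_mul]
                calc |t| * |h v c| ≤ 1 * 1 := by
                      apply mul_le_mul (by rwa [abs_of_nonneg ht0]) (hh1 v c)
                        (abs_nonneg _) zero_le_one
                  _ = 1 := by ring
            _ = (Fintype.card V : ℝ) + t * (∑ v, h v c) + t^2 * ∑ v, (h v c)^2 := by
                rw [Finset.sum_add_distrib, Finset.sum_add_distrib]
                congr 1
                · congr 1
                  · simp [Finset.card_univ]
                  · rw [Finset.mul_sum]
                · rw [Finset.mul_sum]
                  apply Finset.sum_congr rfl
                  intro v _
                  ring
            _ = (Fintype.card V : ℝ) + t^2 * ∑ v, (h v c)^2 := by rw [hh0 c]; ring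
            _ ≤ (Fintype.card V : ℝ) + t^2 * (Fintype.card V : ℝ) := by
                have : ∑ v, (h v c)^2 ≤ ∑ v : V, (1:ℝ) := by
                  apply Finset.sum_le_sum; intro v _
                  have := hh1 v c
                  nlinarith [abs_nonneg (h v c), sq_abs (h v c)]
                simp only [Finset.sum_const, Finset.card_univ, smul_eq_mul, nsmul_eq_mul,
                  mul_one] at this
                nlinarith [sq_nonneg t]
            _ = (Fintype.card V : ℝ) * (1 + t^2) := by ring
        · simp [hgdef, hq, Finset.card_univ]
      have hnonneg : ∀ q : {p // σ p}, 0 ≤ ∑ v, g ω₂ q v := by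
        intro q
        apply Finset.sum_nonneg; intro v _
        simp only [hgdef]
        split
        · exact (Real.exp_pos _).le
        · norm_num
      calc ∏ q : {p // σ p}, ∑ v, g ω₂ q v
          ≤ ∏ q : {p // σ p}, ((Fintype.card V : ℝ) * (if q.1 ∈ W then (1 + t^2) else 1)) :=
            Finset.prod_le_prod (fun q _ => hnonneg q) (fun q _ => hfactor q)
        _ = (Fintype.card V : ℝ) ^ (Fintype.card {p // σ p})
            * ∏ q : {p // σ p}, (if q.1 ∈ W then (1 + t^2) else 1) := by
            rw [Finset.prod_mul_distrib, Finset.prod_const, Finset.card_univ]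
        _ ≤ (Fintype.card V : ℝ) ^ (Fintype.card {p // σ p}) * (1 + t^2) ^ W.card := by
            apply mul_le_mul_of_nonneg_left _ (by positivity)
            rw [← Finset.prod_filter]
            have hcard : (Finset.univ.filter (fun q : {p // σ p} => q.1 ∈ W)).card ≤ W.card := by
              apply Finset.card_le_card_of_injOn (fun q => q.1)
              · intro q hq; exact (Finset.mem_filter.1 hq).2
              · exact Subtype.coe_injective.injOn
            calc ∏ _q ∈ Finset.univ.filter (fun q : {p // σ p} => q.1 ∈ W), (1 + t^2)
                = (1 + t^2) ^ (Finset.univ.filter (fun q : {p // σ p} => q.1 ∈ W)).card :=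
                  Finset.prod_const _
              _ ≤ (1 + t^2) ^ W.card := by
                  apply pow_le_pow_right₀ (by nlinarith [sq_nonneg t]) hcard
        _ = (Fintype.card ({p // σ p} → V) : ℝ) * (1 + t^2) ^ W.card := by
            rw [Fintype.card_fun]; push_cast; ring
    calc ∑ ω : P → V, F ω
        = ∑ z : ({p // σ p} → V) × ({p // ¬ σ p} → V), F (e.symm z) := hsum
      _ = ∑ ω₂ : {p // ¬ σ p} → V, ∑ ω₁ : {p // σ p} → V, F (e.symm (ω₁, ω₂)) := by
          rw [Fintype.sum_prod_type]; exact Finset.sum_comm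
      _ = ∑ ω₂ : {p // ¬ σ p} → V, ∑ ω₁ : {p // σ p} → V, ∏ q : {p // σ p}, g ω₂ q (ω₁ q) := by
          apply Finset.sum_congr rfl; intro ω₂ _
          apply Finset.sum_congr rfl; intro ω₁ _
          exact hFv ω₁ ω₂
      _ ≤ ∑ _ω₂ : {p // ¬ σ p} → V,
            (Fintype.card ({p // σ p} → V) : ℝ) * (1 + t^2) ^ W.card :=
          Finset.sum_le_sum (fun ω₂ _ => hinner ω₂)
      _ = (Fintype.card ({p // ¬ σ p} → V) : ℝ) * ((Fintype.card ({p // σ p} → V) : ℝ)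
            * (1 + t^2) ^ W.card) := by
          rw [Finset.sum_const, Finset.card_univ, nsmul_eq_mul]
      _ = (Fintype.card (P → V) : ℝ) * (1 + t^2) ^ W.card := by
          have : Fintype.card (P → V)
              = Fintype.card ({p // σ p} → V) * Fintype.card ({p // ¬ σ p} → V) := by
            rw [Fintype.card_congr e, Fintype.card_prod]
          rw [this]; push_cast; ring
  -- Chernoff step
  calc ((Finset.univ.filter (fun ω : P → V => s ≤ ∑ w ∈ W, h (ω w) (ω (φ w)))).card : ℝ)
      = ∑ ω ∈ Finset.univ.filter (fun ω : P → V => s ≤ ∑ w ∈ W, h (ω w) (ω (φ w))), (1:ℝ) := by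
        rw [Finset.sum_const, nsmul_eq_mul, mul_one]
    _ ≤ ∑ ω ∈ Finset.univ.filter (fun ω : P → V => s ≤ ∑ w ∈ W, h (ω w) (ω (φ w))),
          Real.exp (t * ((∑ w ∈ W, h (ω w) (ω (φ w))) - s)) := by
        apply Finset.sum_le_sum; intro ω hω
        have hm := (Finset.mem_filter.1 hω).2
        rw [← Real.exp_zero]
        apply Real.exp_le_exp.2
        have : 0 ≤ (∑ w ∈ W, h (ω w) (ω (φ w))) - s := by linarith
        positivity
    _ ≤ ∑ ω : P → V, Real.exp (t * ((∑ w ∈ W, h (ω w) (ω (φ w))) - s)) := by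
        apply Finset.sum_le_sum_of_subset_of_nonneg (Finset.filter_subset _ _)
        intro ω _ _; exact (Real.exp_pos _).le
    _ = Real.exp (-(t*s)) * ∑ ω : P → V, ∏ w ∈ W, Real.exp (t * h (ω w) (ω (φ w))) := by
        rw [Finset.mul_sum]
        apply Finset.sum_congr rfl; intro ω _
        rw [← Real.exp_sum, ← Real.exp_add]
        congr 1
        rw [show ∑ x ∈ W, t * h (ω x) (ω (φ x)) = t * ∑ x ∈ W, h (ω x) (ω (φ x)) from
          (Finset.mul_sum _ _ _).symm]
        ring
    _ ≤ Real.exp (-(t*s)) * ((Fintype.card (P → V) : ℝ) * (1 + t^2) ^ W.card) := by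
        apply mul_le_mul_of_nonneg_left key (Real.exp_pos _).le
    _ = (Fintype.card (P → V) : ℝ) * (1 + t^2) ^ W.card * Real.exp (-(t * s)) := by ring

noncomputable def hfun (m : ℕ) (T : Finset (BS m × BS m)) (u v : BS m) : ℝ :=
  (if (u, v) ∈ T then 1 else 0)
    - ((Finset.univ.filter (fun u' : BS m => (u', v) ∈ T)).card : ℝ) / 2^m

lemma card_BS (m : ℕ) : Fintype.card (BS m) = 2^m := by
  simp [Fintype.card_fun]

lemma hfun_abs_le (m : ℕ) (T : Finset (BS m × BS m)) (u v : BS m) : |hfun m T u v| ≤ 1 := by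
  have h3 : (0:ℝ) < 2^m := by positivity
  have h1 : ((Finset.univ.filter (fun u' : BS m => (u', v) ∈ T)).card : ℝ) / 2^m ≤ 1 := by
    rw [div_le_one h3]
    calc ((Finset.univ.filter (fun u' : BS m => (u', v) ∈ T)).card : ℝ)
        ≤ ((Finset.univ : Finset (BS m)).card : ℝ) := by
          exact_mod_cast Finset.card_le_card (Finset.filter_subset _ _)
      _ = 2^m := by rw [Finset.card_univ, card_BS]; push_cast; ring
  have h2 : (0:ℝ) ≤ ((Finset.univ.filter (fun u' : BS m => (u', v) ∈ T)).card : ℝ) / 2^m := by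
    positivity
  rw [hfun, abs_le]
  constructor <;> split <;> linarith

lemma hfun_sum_zero (m : ℕ) (T : Finset (BS m × BS m)) (v : BS m) :
    ∑ u, hfun m T u v = 0 := by
  have h3 : (2:ℝ)^m ≠ 0 := by positivity
  simp only [hfun]
  rw [Finset.sum_sub_distrib, Finset.sum_boole, Finset.sum_const, Finset.card_univ, card_BS]
  simp only [nsmul_eq_mul]
  push_cast
  field_simp
  ring

lemma exists_good (n m K : ℕ) (δ : ℝ) (hδ0 : 0 < δ) (hδ1 : δ ≤ 1)
    (hfin : (Fintype.card ((BS n → BS n) × (BS n → BS n) × Finset (BS n) × Finset (BS n)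
        × Finset (BS m × BS m) × Fin 3) : ℝ)
        * ((1 + (δ/6)^2) ^ (K*K) * Real.exp (-((δ/6) * (δ * K^2 / 3)))) < 1) :
    ∃ ω : BS n × BS n → BS m,
      ∀ f g : BS n → BS n, ((∀ x, f x ≠ x) ∨ (∀ y, g y ≠ y)) →
        ∀ A B : Finset (BS n), A.card = K → B.card = K →
          ∀ T : Finset (BS m × BS m),
            ∑ z ∈ A ×ˢ B, hfun m T (ω z) (ω (f z.1, g z.2)) ≤ δ * K^2 := by
  classical
  have hcol : ∀ f g : BS n → BS n, ((∀ x, f x ≠ x) ∨ (∀ y, g y ≠ y)) →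
      ∃ C : BS n × BS n → Fin 3, ∀ z : BS n × BS n, C (f z.1, g z.2) ≠ C z := by
    intro f g hfg
    rcases hfg with hf | hg
    · obtain ⟨c, hc⟩ := exists_tricolor f hf
      exact ⟨fun z => c z.1, fun z => hc z.1⟩
    · obtain ⟨c, hc⟩ := exists_tricolor g hg
      exact ⟨fun z => c z.2, fun z => hc z.2⟩
  set Col : (BS n → BS n) → (BS n → BS n) → (BS n × BS n → Fin 3) := fun f g =>
    if h : ((∀ x, f x ≠ x) ∨ (∀ y, g y ≠ y)) then (hcol f g h).choose else fun _ => 0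
    with hColdef
  have hColprop : ∀ f g, ∀ (h : ((∀ x, f x ≠ x) ∨ (∀ y, g y ≠ y))), ∀ (z : BS n × BS n),
      Col f g (f z.1, g z.2) ≠ Col f g z := by
    intro f g h z
    rw [hColdef]
    simp only [dif_pos h]
    exact (hcol f g h).choose_spec z
  set R : ℝ := (1 + (δ/6)^2) ^ (K*K) * Real.exp (-((δ/6) * (δ * K^2 / 3))) with hRdef
  have hRpos : 0 < R := by
    apply mul_pos
    · apply pow_pos; nlinarith [sq_nonneg (δ/6)]
    · exact Real.exp_pos _
  set badSet : ((BS n → BS n) × (BS n → BS n) × Finset (BS n) × Finset (BS n)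
      × Finset (BS m × BS m) × Fin 3) → Finset (BS n × BS n → BS m) := fun idx =>
    if ((∀ x, idx.1 x ≠ x) ∨ (∀ y, idx.2.1 y ≠ y)) ∧ idx.2.2.1.card = K ∧ idx.2.2.2.1.card = K
    then Finset.univ.filter (fun ω => δ * K^2 / 3 ≤
      ∑ z ∈ (idx.2.2.1 ×ˢ idx.2.2.2.1).filter
          (fun z => Col idx.1 idx.2.1 z = idx.2.2.2.2.2),
        hfun m idx.2.2.2.2.1 (ω z) (ω (idx.1 z.1, idx.2.1 z.2)))
    else ∅
    with hbaddef
  have hbound : ∀ idx, ((badSet idx).card : ℝ)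
      ≤ (Fintype.card (BS n × BS n → BS m) : ℝ) * R := by
    rintro ⟨f, g, A, B, T, i⟩
    by_cases hcond : ((∀ x, f x ≠ x) ∨ (∀ y, g y ≠ y)) ∧ A.card = K ∧ B.card = K
    · have hbs : badSet (f, g, A, B, T, i) = Finset.univ.filter (fun ω => δ * K^2 / 3 ≤
          ∑ z ∈ (A ×ˢ B).filter (fun z => Col f g z = i),
            hfun m T (ω z) (ω (f z.1, g z.2))) := by
        rw [hbaddef]; exact if_pos hcond
      rw [hbs]
      have hWcard : ((A ×ˢ B).filter (fun z => Col f g z = i)).card ≤ K * K := by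
        calc ((A ×ˢ B).filter (fun z => Col f g z = i)).card ≤ (A ×ˢ B).card :=
              Finset.card_le_card (Finset.filter_subset _ _)
          _ = A.card * B.card := Finset.card_product A B
          _ = K * K := by rw [hcond.2.1, hcond.2.2]
      have hmain := hoeffding_count (fun z : BS n × BS n => (f z.1, g z.2)) (Col f g)
        (fun z => hColprop f g hcond.1 z) i
        ((A ×ˢ B).filter (fun z => Col f g z = i))
        (fun w hw => (Finset.mem_filter.1 hw).2)
        (hfun m T) (hfun_abs_le m T) (hfun_sum_zero m T)
        (δ/6) (δ * K^2 / 3) (by positivity) (by linarith)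
      refine hmain.trans ?_
      rw [hRdef, ← mul_assoc]
      apply mul_le_mul_of_nonneg_right _ (Real.exp_pos _).le
      apply mul_le_mul_of_nonneg_left _ (by positivity)
      apply pow_le_pow_right₀ (by nlinarith [sq_nonneg (δ/6)]) hWcard
    · have hbs : badSet (f, g, A, B, T, i) = ∅ := by rw [hbaddef]; exact if_neg hcond
      rw [hbs]
      simp only [Finset.card_empty, Nat.cast_zero]
      positivity
  by_contra hno
  push_neg at hno
  have hcover : (Finset.univ : Finset (BS n × BS n → BS m))
      ⊆ Finset.univ.biUnion badSet := by
    intro ω _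
    obtain ⟨f, g, hfg, A, B, hA, hB, T, hT⟩ := hno ω
    have hsplit : ∑ z ∈ A ×ˢ B, hfun m T (ω z) (ω (f z.1, g z.2))
        = ∑ i : Fin 3, ∑ z ∈ (A ×ˢ B).filter (fun z => Col f g z = i),
            hfun m T (ω z) (ω (f z.1, g z.2)) :=
      (Finset.sum_fiberwise _ _ _).symm
    have hex : ∃ i : Fin 3, δ * K^2 / 3 ≤
        ∑ z ∈ (A ×ˢ B).filter (fun z => Col f g z = i),
          hfun m T (ω z) (ω (f z.1, g z.2)) := by
      by_contra hc
      push_neg at hc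
      have hlt : ∑ i : Fin 3, ∑ z ∈ (A ×ˢ B).filter (fun z => Col f g z = i),
          hfun m T (ω z) (ω (f z.1, g z.2)) < ∑ _i : Fin 3, δ * K^2 / 3 :=
        Finset.sum_lt_sum_of_nonempty Finset.univ_nonempty (fun i _ => hc i)
      rw [← hsplit] at hlt
      simp only [Finset.sum_const, Finset.card_univ, Fintype.card_fin, nsmul_eq_mul] at hlt
      push_cast at hlt
      linarith
    obtain ⟨i, hi⟩ := hex
    apply Finset.mem_biUnion.2
    refine ⟨(f, g, A, B, T, i), Finset.mem_univ _, ?_⟩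
    have hbs : badSet (f, g, A, B, T, i) = Finset.univ.filter (fun ω => δ * K^2 / 3 ≤
        ∑ z ∈ (A ×ˢ B).filter (fun z => Col f g z = i),
          hfun m T (ω z) (ω (f z.1, g z.2))) := by
      rw [hbaddef]; exact if_pos ⟨hfg, hA, hB⟩
    rw [hbs]
    exact Finset.mem_filter.2 ⟨Finset.mem_univ _, hi⟩
  have h1 : (Fintype.card (BS n × BS n → BS m) : ℝ)
      ≤ ∑ idx, ((badSet idx).card : ℝ) := by
    have := Finset.card_le_card hcover
    have h2 := (Finset.card_biUnion_le (s := (Finset.univ : Finset ((BS n → BS n)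
        × (BS n → BS n) × Finset (BS n) × Finset (BS n)
        × Finset (BS m × BS m) × Fin 3))) (t := badSet))
    have h3 : Fintype.card (BS n × BS n → BS m) ≤ ∑ idx, (badSet idx).card := by
      rw [← Finset.card_univ]
      omega
    exact_mod_cast h3
  have h4 : ∑ idx, ((badSet idx).card : ℝ)
      ≤ (Fintype.card ((BS n → BS n) × (BS n → BS n) × Finset (BS n) × Finset (BS n)
        × Finset (BS m × BS m) × Fin 3) : ℝ) * ((Fintype.card (BS n × BS n → BS m) : ℝ) * R) := by
    calc ∑ idx, ((badSet idx).card : ℝ)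
        ≤ ∑ _idx : ((BS n → BS n) × (BS n → BS n) × Finset (BS n) × Finset (BS n)
            × Finset (BS m × BS m) × Fin 3),
            ((Fintype.card (BS n × BS n → BS m) : ℝ) * R) :=
          Finset.sum_le_sum (fun idx _ => hbound idx)
      _ = _ := by rw [Finset.sum_const, Finset.card_univ, nsmul_eq_mul]
  have hΩpos : (0:ℝ) < (Fintype.card (BS n × BS n → BS m) : ℝ) := by
    exact_mod_cast Fintype.card_pos
  have h5 : (Fintype.card ((BS n → BS n) × (BS n → BS n) × Finset (BS n) × Finset (BS n)
      × Finset (BS m × BS m) × Fin 3) : ℝ) * ((Fintype.card (BS n × BS n → BS m) : ℝ) * R)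
      < (Fintype.card (BS n × BS n → BS m) : ℝ) := by
    calc (Fintype.card _ : ℝ) * ((Fintype.card (BS n × BS n → BS m) : ℝ) * R)
        = (Fintype.card (BS n × BS n → BS m) : ℝ) * ((Fintype.card _ : ℝ) * R) := by ring
      _ < (Fintype.card (BS n × BS n → BS m) : ℝ) * 1 := by
          apply mul_lt_mul_of_pos_left hfin hΩpos
      _ = _ := mul_one _
  linarith


lemma key_identity (n m : ℕ) (ω : BS n × BS n → BS m) (f g : BS n → BS n)
    (p : BS n × BS n → ℝ) (T : Finset (BS m × BS m)) :
    ∑ t ∈ T, (distMap (fun z : BS n × BS n => (ω z, ω (f z.1, g z.2))) p t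
      - distProd (unifDist (BS m)) (distMap (fun z : BS n × BS n => ω (f z.1, g z.2)) p) t)
    = ∑ z : BS n × BS n, p z * hfun m T (ω z) (ω (f z.1, g z.2)) := by
  classical
  rw [Finset.sum_sub_distrib]
  have hP : ∑ t ∈ T, distMap (fun z : BS n × BS n => (ω z, ω (f z.1, g z.2))) p t
      = ∑ z : BS n × BS n,
          p z * (if (ω z, ω (f z.1, g z.2)) ∈ T then (1:ℝ) else 0) := by
    simp only [distMap]
    rw [Finset.sum_fiberwise_eq_sum_filter Finset.univ T
      (fun z : BS n × BS n => (ω z, ω (f z.1, g z.2))) p]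
    rw [Finset.sum_filter]
    apply Finset.sum_congr rfl
    intro z _
    by_cases hz : (ω z, ω (f z.1, g z.2)) ∈ T <;> simp [hz]
  have hQ : ∑ t ∈ T, distProd (unifDist (BS m))
        (distMap (fun z : BS n × BS n => ω (f z.1, g z.2)) p) t
      = ∑ z : BS n × BS n, p z *
          (((Finset.univ.filter (fun u : BS m => (u, ω (f z.1, g z.2)) ∈ T)).card : ℝ)
            / 2^m) := by
    simp only [distProd, unifDist, distMap, card_BS]
    calc ∑ t ∈ T, ((2^m : ℕ):ℝ)⁻¹
          * ∑ z ∈ Finset.univ.filter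
              (fun z : BS n × BS n => ω (f z.1, g z.2) = t.2), p z
        = ∑ t ∈ T, ∑ z : BS n × BS n,
            ((2^m : ℕ):ℝ)⁻¹ * (if ω (f z.1, g z.2) = t.2 then p z else 0) := by
          apply Finset.sum_congr rfl; intro t _
          rw [Finset.sum_filter, Finset.mul_sum]
      _ = ∑ z : BS n × BS n, ∑ t ∈ T,
            ((2^m : ℕ):ℝ)⁻¹ * (if ω (f z.1, g z.2) = t.2 then p z else 0) :=
          Finset.sum_comm
      _ = ∑ z : BS n × BS n, p z *
            (((Finset.univ.filter (fun u : BS m => (u, ω (f z.1, g z.2)) ∈ T)).card : ℝ)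
              / 2^m) := by
          apply Finset.sum_congr rfl; intro z _
          rw [← Finset.mul_sum, ← Finset.sum_filter]
          have hcards : (T.filter (fun t => ω (f z.1, g z.2) = t.2)).card
              = (Finset.univ.filter
                  (fun u : BS m => (u, ω (f z.1, g z.2)) ∈ T)).card := by
            rw [← slice_card T (ω (f z.1, g z.2))]
            congr 1
            apply Finset.filter_congr
            intro t _
            constructor
            · intro h; exact h.symm
            · intro h; exact h.symm
          rw [Finset.sum_const, nsmul_eq_mul, hcards]
          push_cast
          ring
  rw [hP, hQ, ← Finset.sum_sub_distrib]
  apply Finset.sum_congr rfl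
  intro z _
  rw [hfun]
  ring

lemma sum_distMap {α β : Type*} [Fintype α] [Fintype β] [DecidableEq β]
    (f : α → β) (p : α → ℝ) : ∑ y, distMap f p y = ∑ x, p x := by
  simp only [distMap]
  exact Finset.sum_fiberwise_of_maps_to (fun x _ => Finset.mem_univ _) p

lemma sum_distProd {α β : Type*} [Fintype α] [Fintype β] (p : α → ℝ) (q : β → ℝ) :
    ∑ z : α × β, distProd p q z = (∑ x, p x) * (∑ y, q y) := by
  rw [Fintype.sum_prod_type, Finset.sum_mul_sum]
  rfl


lemma good_implies (n m K : ℕ) (hK1 : 1 ≤ K) (hKcard : K ≤ 2^n) (k δ : ℝ)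
    (hk : (2:ℝ)^(-k) ≤ 1/K) (ω : BS n × BS n → BS m)
    (hgood : ∀ f g : BS n → BS n, ((∀ x, f x ≠ x) ∨ (∀ y, g y ≠ y)) →
      ∀ A B : Finset (BS n), A.card = K → B.card = K → ∀ T : Finset (BS m × BS m),
        ∑ z ∈ A ×ˢ B, hfun m T (ω z) (ω (f z.1, g z.2)) ≤ δ * K^2) :
    IsNM2Ext (n := n) (m := m) (fun x y => ω (x, y)) k δ := by
  classical
  intro pX pY hX hY hmX hmY f g hfg
  have hKpos : (0:ℝ) < K := by exact_mod_cast hK1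
  have hcard : K ≤ Fintype.card (BS n) := by rw [card_BS]; exact hKcard
  have hpXK : ∀ x, pX x ≤ 1/K := fun x => (hmX x).trans hk
  have hpYK : ∀ y, pY y ≤ 1/K := fun y => (hmY y).trans hk
  apply statDist_le'
  · -- total masses agree
    rw [sum_distMap, sum_distProd, hX.2, hY.2, Fintype.sum_prod_type]
    have hunif : ∑ u : BS m, unifDist (BS m) u = 1 := by
      simp only [unifDist, Finset.sum_const, Finset.card_univ, nsmul_eq_mul]
      rw [mul_inv_cancel₀]
      have : (0:ℕ) < Fintype.card (BS m) := Fintype.card_pos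
      exact_mod_cast this.ne'
    calc (1:ℝ) * 1 = 1 := by ring
      _ = (∑ u : BS m, unifDist (BS m) u)
          * (∑ w : BS m, distMap (fun z : BS n × BS n =>
              (fun x y => ω (x, y)) (f z.1) (g z.2)) (distProd pX pY) w) := by
          rw [hunif, sum_distMap, sum_distProd, hX.2, hY.2]; ring
      _ = ∑ u : BS m, ∑ w : BS m, unifDist (BS m) u
          * distMap (fun z : BS n × BS n =>
              (fun x y => ω (x, y)) (f z.1) (g z.2)) (distProd pX pY) w := by
          rw [Finset.sum_mul_sum]
      _ = _ := rfl
  · intro T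
    have hb : (fun z : BS n × BS n => ((fun x y => ω (x, y)) z.1 z.2,
        (fun x y => ω (x, y)) (f z.1) (g z.2)))
        = (fun z : BS n × BS n => (ω z, ω (f z.1, g z.2))) := rfl
    rw [hb]
    rw [key_identity n m ω f g (distProd pX pY) T]
    -- now reduce to the flat bound
    have hD : ∀ z : BS n × BS n, distProd pX pY z * hfun m T (ω z) (ω (f z.1, g z.2))
        = pX z.1 * (pY z.2 * hfun m T (ω z) (ω (f z.1, g z.2))) := by
      intro z; rw [distProd]; ring
    rw [Finset.sum_congr rfl (fun z _ => hD z), Fintype.sum_prod_type]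
    have htop : ∑ x : BS n, pX x * (∑ y : BS n, pY y * hfun m T (ω (x,y)) (ω (f x, g y)))
        ≤ (δ * K) / K := by
      apply source_bound pX _ hX.1 hX.2 K hK1 hpXK hcard
      intro A hA
      have hswap : ∑ x ∈ A, ∑ y : BS n, pY y * hfun m T (ω (x,y)) (ω (f x, g y))
          = ∑ y : BS n, pY y * ∑ x ∈ A, hfun m T (ω (x,y)) (ω (f x, g y)) := by
        rw [Finset.sum_comm]
        apply Finset.sum_congr rfl
        intro y _
        rw [Finset.mul_sum]
      rw [hswap]
      have hinner : ∑ y : BS n, pY y * ∑ x ∈ A, hfun m T (ω (x,y)) (ω (f x, g y))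
          ≤ (δ * K^2) / K := by
        apply source_bound pY _ hY.1 hY.2 K hK1 hpYK hcard
        intro B hB
        have hprod : ∑ y ∈ B, ∑ x ∈ A, hfun m T (ω (x,y)) (ω (f x, g y))
            = ∑ z ∈ A ×ˢ B, hfun m T (ω z) (ω (f z.1, g z.2)) := by
          rw [Finset.sum_product]
          exact Finset.sum_comm
        rw [hprod]
        exact hgood f g hfg A B hA hB T
      refine hinner.trans (le_of_eq ?_)
      field_simp
    refine le_trans ?_ (htop.trans ?_)
    · apply le_of_eq
      apply Finset.sum_congr rfl
      intro x _
      rw [Finset.mul_sum]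
    · apply le_of_eq
      rw [mul_div_assoc, div_self hKpos.ne', mul_one]

lemma nat_sq_le_two_pow : ∀ n : ℕ, 4 ≤ n → n^2 ≤ 2^n := by
  intro n
  induction n with
  | zero => omega
  | succ k ih =>
    intro h
    rcases Nat.lt_or_ge k 4 with hk | hk
    · have hk3 : k = 3 := by omega
      subst hk3; norm_num
    · have h1 := ih hk
      have h2 : 2*k + 1 ≤ k^2 := by nlinarith
      have h3 : 2^(k+1) = 2^k + 2^k := by ring
      calc (k+1)^2 = k^2 + (2*k+1) := by ring
        _ ≤ k^2 + k^2 := by omega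
        _ ≤ 2^k + 2^k := by omega
        _ = 2^(k+1) := by omega

set_option maxHeartbeats 1000000 in
theorem stmt3 :
    ∃ γ c : ℝ, 0 < γ ∧ γ < 1 ∧ 0 < c ∧ ∃ N₀ : ℕ, ∀ n : ℕ, n ≥ N₀ →
      ∃ m : ℕ, (m : ℝ) ≥ c * n ∧
        ∃ nmExt : BS n → BS n → BS m,
          IsNM2Ext nmExt ((1 - γ) * n) ((2:ℝ) ^ (-(c * n / logb 2 n))) := by
  refine ⟨1/8, 1/100, by norm_num, by norm_num, by norm_num, 300, ?_⟩
  intro n hn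
  have hn300 : (300:ℝ) ≤ (n:ℝ) := by exact_mod_cast hn
  set N : ℝ := (n : ℝ) with hNdef
  refine ⟨n/2 + 1, ?_, ?_⟩
  · have h1 : (n:ℕ) ≤ 2 * (n/2 + 1) := by omega
    have h2 : (n:ℝ) ≤ 2 * ((n/2 + 1 : ℕ):ℝ) := by exact_mod_cast h1
    push_cast at h2 ⊢
    nlinarith
  · set m : ℕ := n/2 + 1 with hmdef
    set δ : ℝ := (2:ℝ) ^ (-(1/100 * N / Real.logb 2 N)) with hδdef
    set x : ℝ := (2:ℝ) ^ ((7:ℝ)/8 * N) with hxdef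
    set K : ℕ := ⌊x⌋₊ with hKdef
    have hNpos : (0:ℝ) < N := by linarith
    have hlogb : 1 ≤ Real.logb 2 N := by
      have h2N : (2:ℝ)^(1:ℝ) ≤ N := by rw [Real.rpow_one]; linarith
      exact (Real.le_logb_iff_rpow_le one_lt_two hNpos).2 h2N
    have hδ0 : 0 < δ := Real.rpow_pos_of_pos (by norm_num) _
    have hδ1 : δ ≤ 1 := by
      apply Real.rpow_le_one_of_one_le_of_nonpos one_le_two
      have h0 : 0 ≤ 1/100 * N / Real.logb 2 N := by positivity
      linarith
    have hδlow : (2:ℝ)^(-(N/100)) ≤ δ := by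
      apply Real.rpow_le_rpow_of_exponent_le one_le_two
      have h1 : 1/100 * N / Real.logb 2 N ≤ 1/100 * N / 1 :=
        div_le_div_of_nonneg_left (by positivity) (by norm_num) hlogb
      rw [div_one] at h1
      linarith
    have hx2 : 2 ≤ x := by
      rw [hxdef]
      calc (2:ℝ) = 2^(1:ℝ) := (Real.rpow_one 2).symm
        _ ≤ 2^((7:ℝ)/8 * N) := Real.rpow_le_rpow_of_exponent_le one_le_two (by linarith)
    have hK1 : 1 ≤ K := by
      apply Nat.le_floor
      push_cast
      linarith
    have hKup : (K:ℝ) ≤ x := Nat.floor_le (by positivity)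
    have hKpos : (0:ℝ) < K := by exact_mod_cast hK1
    have hKlow : (2:ℝ)^((7:ℝ)/8 * N - 1) ≤ (K:ℝ) := by
      have h1 : x - 1 < (K:ℝ) := Nat.sub_one_lt_floor x
      have h2 : (2:ℝ)^((7:ℝ)/8 * N - 1) = x / 2 := by
        rw [hxdef, Real.rpow_sub (by norm_num), Real.rpow_one]
      rw [h2]
      linarith
    have hKcard : K ≤ 2^n := by
      have h1 : (K:ℝ) ≤ ((2^n : ℕ):ℝ) := by
        push_cast
        calc (K:ℝ) ≤ x := hKup
          _ ≤ (2:ℝ)^(N) := Real.rpow_le_rpow_of_exponent_le one_le_two (by linarith)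
          _ = (2:ℝ)^(n:ℕ) := by rw [hNdef, Real.rpow_natCast]
      exact_mod_cast h1
    have hk : (2:ℝ)^(-((1 - 1/8) * N)) ≤ 1/(K:ℝ) := by
      have h78 : -((1 - 1/8 : ℝ) * N) = -((7:ℝ)/8 * N) := by ring
      rw [h78, Real.rpow_neg (by norm_num), one_div]
      apply inv_anti₀ hKpos
      rw [← hxdef]
      exact hKup
    set M : ℕ := n*2^n + n*2^n + 2^n + 2^n + 2^m*2^m + 2 with hMdef
    have hfin : (Fintype.card ((BS n → BS n) × (BS n → BS n) × Finset (BS n) × Finset (BS n)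
        × Finset (BS m × BS m) × Fin 3) : ℝ)
        * ((1 + (δ/6)^2) ^ (K*K) * Real.exp (-(δ/6 * (δ * (K:ℝ)^2 / 3)))) < 1 := by
      have hcardIdx : Fintype.card ((BS n → BS n) × (BS n → BS n) × Finset (BS n)
          × Finset (BS n) × Finset (BS m × BS m) × Fin 3) ≤ 2^M := by
        have hIdx : Fintype.card ((BS n → BS n) × (BS n → BS n) × Finset (BS n)
            × Finset (BS n) × Finset (BS m × BS m) × Fin 3)
            = (2^n)^(2^n) * ((2^n)^(2^n) * (2^(2^n) * (2^(2^n) * (2^(2^m*2^m) * 3)))) := by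
          simp [Fintype.card_prod, Fintype.card_fun, card_BS, Fintype.card_finset,
            Fintype.card_fin]
        rw [hIdx, hMdef]
        calc (2^n)^(2^n) * ((2^n)^(2^n) * (2^(2^n) * (2^(2^n) * (2^(2^m*2^m) * 3))))
            ≤ 2^(n*2^n) * (2^(n*2^n) * (2^(2^n) * (2^(2^n) * (2^(2^m*2^m) * 2^2)))) := by
              rw [← pow_mul]
              gcongr <;> norm_num
          _ = 2^(n*2^n + (n*2^n + (2^n + (2^n + (2^m*2^m + 2))))) := by
              rw [← pow_add, ← pow_add, ← pow_add, ← pow_add, ← pow_add]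
          _ = 2^(n*2^n + n*2^n + 2^n + 2^n + 2^m*2^m + 2) := by ring_nf
      -- real/analytic part
      have hδsq : (2:ℝ)^(-(N/50)) ≤ δ^2 := by
        have h1 : ((2:ℝ)^(-(N/100)))^2 ≤ δ^2 := pow_le_pow_left₀ (by positivity) hδlow 2
        have h2 : ((2:ℝ)^(-(N/100)))^2 = (2:ℝ)^(-(N/50)) := by
          rw [sq, ← Real.rpow_add (by norm_num)]
          ring_nf
        rw [← h2]; exact h1
      have hKsq : (2:ℝ)^((7:ℝ)/4 * N - 2) ≤ (K:ℝ)^2 := by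
        have h1 : ((2:ℝ)^((7:ℝ)/8 * N - 1))^2 ≤ (K:ℝ)^2 :=
          pow_le_pow_left₀ (by positivity) hKlow 2
        have h2 : ((2:ℝ)^((7:ℝ)/8 * N - 1))^2 = (2:ℝ)^((7:ℝ)/4 * N - 2) := by
          rw [sq, ← Real.rpow_add (by norm_num)]
          ring_nf
        rw [← h2]; exact h1
      have hδK : (2:ℝ)^((173:ℝ)/100 * N - 2) ≤ δ^2 * (K:ℝ)^2 := by
        have h1 : (2:ℝ)^(-(N/50)) * (2:ℝ)^((7:ℝ)/4 * N - 2) ≤ δ^2 * (K:ℝ)^2 := by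
          apply mul_le_mul hδsq hKsq (by positivity) (by positivity)
        have h2 : (2:ℝ)^(-(N/50)) * (2:ℝ)^((7:ℝ)/4 * N - 2)
            = (2:ℝ)^((173:ℝ)/100 * N - 2) := by
          rw [← Real.rpow_add (by norm_num)]
          ring_nf
        rw [← h2]; exact h1
      have hRHS : (2:ℝ)^((173:ℝ)/100 * N - 8) ≤ δ^2 * (K:ℝ)^2 / 36 := by
        rw [le_div_iff₀ (by norm_num : (0:ℝ) < 36)]
        calc (2:ℝ)^((173:ℝ)/100 * N - 8) * 36
            ≤ (2:ℝ)^((173:ℝ)/100 * N - 8) * 2^(6:ℝ) := by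
              have h64 : (2:ℝ)^(6:ℝ) = 64 := by
                rw [show (6:ℝ) = ((6:ℕ):ℝ) by norm_num, Real.rpow_natCast]; norm_num
              rw [h64]
              have hp : (0:ℝ) < (2:ℝ)^((173:ℝ)/100 * N - 8) :=
                Real.rpow_pos_of_pos (by norm_num) _
              nlinarith
          _ = (2:ℝ)^((173:ℝ)/100 * N - 2) := by
              rw [← Real.rpow_add (by norm_num)]
              ring_nf
          _ ≤ δ^2 * (K:ℝ)^2 := hδK
      -- upper bound on M
      have hN2 : N ≤ (2:ℝ)^(N/2) := by
        have h1 : (n:ℕ)^2 ≤ 2^n := nat_sq_le_two_pow n (by omega)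
        have h2 : N^2 ≤ ((2:ℝ)^(N/2))^2 := by
          have h3 : ((2:ℝ)^(N/2))^2 = (2:ℝ)^N := by
            rw [sq, ← Real.rpow_add (by norm_num)]; ring_nf
          rw [h3, hNdef]
          calc ((n:ℝ))^2 = (((n^2 : ℕ)):ℝ) := by push_cast; ring
            _ ≤ (((2^n : ℕ)):ℝ) := by exact_mod_cast h1
            _ = (2:ℝ)^((n:ℕ):ℝ) := by rw [Real.rpow_natCast]; push_cast; ring
        have h4 : (0:ℝ) ≤ N := by linarith
        have h5 : (0:ℝ) ≤ (2:ℝ)^(N/2) := by positivity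
        exact (pow_le_pow_iff_left₀ h4 h5 (by norm_num)).1 h2
      have hMup : (M:ℝ) ≤ (2:ℝ)^((3:ℝ)/2 * N + 3) := by
        have h2m : (2:ℕ)^m * 2^m ≤ 2^(n+2) := by
          rw [← pow_add]
          apply Nat.pow_le_pow_right (by norm_num)
          omega
        have hMle : (M:ℝ) ≤ 2*N*(2:ℝ)^(n:ℕ) + 2*(2:ℝ)^(n:ℕ) + (2:ℝ)^((n+2:ℕ)) + 2 := by
          rw [hMdef]
          push_cast
          have h2mr := (Nat.cast_le (α := ℝ)).2 h2m
          push_cast at h2mr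
          linarith [h2mr]
        have hpow2 : ((2:ℝ))^(n:ℕ) = (2:ℝ)^(N) := by rw [hNdef, Real.rpow_natCast]
        have hpow2' : ((2:ℝ))^((n+2:ℕ)) = 4 * (2:ℝ)^(N) := by
          rw [pow_add, hpow2]; norm_num; ring
        have h2Npos : (0:ℝ) < (2:ℝ)^N := Real.rpow_pos_of_pos (by norm_num) _
        have h2N1 : (1:ℝ) ≤ (2:ℝ)^N := Real.one_le_rpow one_le_two (by linarith)
        have hMle2 : (M:ℝ) ≤ (2*N + 8) * (2:ℝ)^N := by
          rw [hpow2, hpow2'] at hMle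
          nlinarith
        have hMle3 : (2*N + 8) * (2:ℝ)^N ≤ 8*N * (2:ℝ)^N := by
          nlinarith
        have hfinal : 8*N*(2:ℝ)^N ≤ (2:ℝ)^((3:ℝ)/2 * N + 3) := by
          have h8 : (8:ℝ) = (2:ℝ)^(3:ℝ) := by
            rw [show (3:ℝ) = ((3:ℕ):ℝ) by norm_num, Real.rpow_natCast]; norm_num
          calc 8*N*(2:ℝ)^N ≤ 8*(2:ℝ)^(N/2)*(2:ℝ)^N := by nlinarith [hN2, h2Npos]
            _ = (2:ℝ)^(3:ℝ) * ((2:ℝ)^(N/2)*(2:ℝ)^N) := by rw [h8]; ring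
            _ = (2:ℝ)^((3:ℝ)/2 * N + 3) := by
                rw [← Real.rpow_add (by norm_num), ← Real.rpow_add (by norm_num)]
                ring_nf
        linarith
      have hMlt : (M:ℝ) < δ^2 * (K:ℝ)^2 / 36 := by
        have hcmp : (2:ℝ)^((3:ℝ)/2 * N + 3) < (2:ℝ)^((173:ℝ)/100 * N - 8) :=
          Real.rpow_lt_rpow_of_exponent_lt one_lt_two (by linarith)
        linarith
      -- assemble
      have hpowexp : ((1 + (δ/6)^2) ^ (K*K) : ℝ) ≤ Real.exp ((δ/6)^2 * ((K*K : ℕ):ℝ)) := by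
        have h1 : (1 + (δ/6)^2 : ℝ) ≤ Real.exp ((δ/6)^2) := by
          have := Real.add_one_le_exp ((δ/6)^2)
          linarith
        calc ((1 + (δ/6)^2) ^ (K*K) : ℝ) ≤ (Real.exp ((δ/6)^2))^(K*K) :=
              pow_le_pow_left₀ (by positivity) h1 (K*K)
          _ = Real.exp ((((K*K):ℕ):ℝ) * (δ/6)^2) := (Real.exp_nat_mul _ _).symm
          _ = Real.exp ((δ/6)^2 * ((K*K : ℕ):ℝ)) := by rw [mul_comm]
      have hcardexp : (Fintype.card ((BS n → BS n) × (BS n → BS n) × Finset (BS n)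
          × Finset (BS n) × Finset (BS m × BS m) × Fin 3) : ℝ) ≤ Real.exp (M:ℝ) := by
        calc (Fintype.card ((BS n → BS n) × (BS n → BS n) × Finset (BS n)
            × Finset (BS n) × Finset (BS m × BS m) × Fin 3) : ℝ)
            ≤ ((2^M : ℕ):ℝ) := by exact_mod_cast hcardIdx
          _ = (2:ℝ)^(M:ℕ) := by push_cast; ring
          _ ≤ (Real.exp 1)^(M:ℕ) := by
              apply pow_le_pow_left₀ (by norm_num)
              have := Real.add_one_le_exp (1:ℝ)
              linarith
          _ = Real.exp ((M:ℝ)) := by rw [← Real.exp_nat_mul, mul_one]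
      have hKK : ((K*K : ℕ):ℝ) = (K:ℝ)^2 := by push_cast; ring
      calc (Fintype.card ((BS n → BS n) × (BS n → BS n) × Finset (BS n) × Finset (BS n)
          × Finset (BS m × BS m) × Fin 3) : ℝ)
          * ((1 + (δ/6)^2) ^ (K*K) * Real.exp (-(δ/6 * (δ * (K:ℝ)^2 / 3))))
          ≤ Real.exp (M:ℝ) * (Real.exp ((δ/6)^2 * ((K*K : ℕ):ℝ))
            * Real.exp (-(δ/6 * (δ * (K:ℝ)^2 / 3)))) := by
            apply mul_le_mul hcardexp _ (by positivity) (by positivity)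
            apply mul_le_mul_of_nonneg_right hpowexp (Real.exp_pos _).le
        _ = Real.exp ((M:ℝ) + ((δ/6)^2 * ((K*K : ℕ):ℝ) - δ/6 * (δ * (K:ℝ)^2 / 3))) := by
            rw [← Real.exp_add, ← Real.exp_add]
            ring_nf
        _ = Real.exp ((M:ℝ) - δ^2 * (K:ℝ)^2 / 36) := by
            rw [hKK]
            congr 1
            ring
        _ < 1 := by
            rw [← Real.exp_zero]
            apply Real.exp_lt_exp.2
            linarith
    obtain ⟨ω, hω⟩ := exists_good n m K δ hδ0 hδ1 hfin
    exact ⟨fun x y => ω (x,y), good_implies n m K hK1 hKcard ((1 - 1/8) * N) δ hk ω hω⟩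
end
end

section
/- For every constant ε > 0 there exists a constant c > 1 such that for all sufficiently large n there is a function Ext : ({0,1}^n)^{10} → {0,1} which is an extractor for 10 independent sources with min-entropy k = ⌈c·log n⌉ and error ε: for all mutually independent (n,k)-sources X_1,…,X_{10}, Δ(Ext(X_1,…,X_{10}), U_1) ≤ ε. -/
open Finset Real

noncomputable section

namespace S6

def bsgn (b : Bool) : ℝ := if b then 1 else -1

lemma bsgn_not (b : Bool) : bsgn (!b) = - bsgn b := by cases b <;> simp [bsgn]

lemma sum_fun_prod {ι γ : Type*} [Fintype ι] [DecidableEq ι] [Fintype γ] (w : ι → γ → ℝ) :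
    ∑ f : ι → γ, ∏ i, w i (f i) = ∏ i, ∑ c, w i c := (Fintype.prod_sum w).symm

lemma sum_exp_eq {γ : Type*} [Fintype γ] [DecidableEq γ] (S : Finset γ) (a : ℝ) :
    ∑ g : γ → Bool, Real.exp (∑ z ∈ S, a * bsgn (g z))
      = 2 ^ (Fintype.card γ - S.card) * (Real.exp a + Real.exp (-a)) ^ S.card := by
  have h1 : ∀ g : γ → Bool, Real.exp (∑ z ∈ S, a * bsgn (g z))
      = ∏ z, (if z ∈ S then Real.exp (a * bsgn (g z)) else 1) := by
    intro g
    rw [Real.exp_sum, ← Finset.prod_mul_prod_compl S]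
    rw [Finset.prod_congr rfl (fun z hz => if_pos hz),
      Finset.prod_congr rfl (fun z hz => if_neg (by simpa using hz)), Finset.prod_const_one,
      mul_one]
  calc ∑ g : γ → Bool, Real.exp (∑ z ∈ S, a * bsgn (g z))
      = ∑ g : γ → Bool, ∏ z, (if z ∈ S then Real.exp (a * bsgn (g z)) else 1) := by
        exact Finset.sum_congr rfl fun g _ => h1 g
    _ = ∏ z, ∑ b : Bool, (if z ∈ S then Real.exp (a * bsgn b) else 1) :=
        sum_fun_prod (fun z b => if z ∈ S then Real.exp (a * bsgn b) else 1)
    _ = ∏ z, (if z ∈ S then Real.exp a + Real.exp (-a) else 2) := by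
        refine Finset.prod_congr rfl fun z _ => ?_
        by_cases hz : z ∈ S <;> simp [hz, bsgn, Fintype.sum_bool] <;> ring
    _ = 2 ^ (Fintype.card γ - S.card) * (Real.exp a + Real.exp (-a)) ^ S.card := by
        rw [← Finset.prod_mul_prod_compl S]
        rw [Finset.prod_congr rfl (fun z hz => if_pos hz),
          Finset.prod_congr rfl (fun z hz => if_neg (by simpa using hz))]
        rw [Finset.prod_const, Finset.prod_const, Finset.card_compl, mul_comm]

lemma card_tail_le {γ : Type*} [Fintype γ] [DecidableEq γ] (S : Finset γ) (t lam : ℝ)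
    (hlam : 0 ≤ lam)
    [DecidablePred fun g : γ → Bool => t ≤ ∑ z ∈ S, bsgn (g z)] :
    (((Finset.univ.filter fun g : γ → Bool => t ≤ ∑ z ∈ S, bsgn (g z)).card : ℝ))
      ≤ 2 ^ (Fintype.card γ) * Real.exp ((S.card : ℝ) * lam ^ 2 / 2 - lam * t) := by
  set A := Finset.univ.filter fun g : γ → Bool => t ≤ ∑ z ∈ S, bsgn (g z) with hA
  have key : (A.card : ℝ) * Real.exp (lam * t)
      ≤ 2 ^ (Fintype.card γ - S.card) * (Real.exp lam + Real.exp (-lam)) ^ S.card := by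
    rw [← sum_exp_eq S lam]
    calc (A.card : ℝ) * Real.exp (lam * t) = ∑ _g ∈ A, Real.exp (lam * t) := by
          rw [Finset.sum_const, nsmul_eq_mul]
      _ ≤ ∑ g ∈ A, Real.exp (∑ z ∈ S, lam * bsgn (g z)) := by
          refine Finset.sum_le_sum fun g hg => ?_
          rw [← Finset.mul_sum]
          refine Real.exp_le_exp.2 (mul_le_mul_of_nonneg_left ?_ hlam)
          exact (Finset.mem_filter.1 hg).2
      _ ≤ ∑ g : γ → Bool, Real.exp (∑ z ∈ S, lam * bsgn (g z)) :=
          Finset.sum_le_sum_of_subset_of_nonneg (Finset.subset_univ A)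
            (fun g _ _ => (Real.exp_pos _).le)
  have hcosh : Real.exp lam + Real.exp (-lam) ≤ 2 * Real.exp (lam ^ 2 / 2) := by
    have h := Real.cosh_le_exp_half_sq lam
    rw [Real.cosh_eq] at h
    linarith
  have hm : S.card ≤ Fintype.card γ := by
    simpa using Finset.card_le_univ S
  calc (A.card : ℝ)
      = ((A.card : ℝ) * Real.exp (lam * t)) * Real.exp (-(lam * t)) := by
        rw [mul_assoc, ← Real.exp_add]; simp
    _ ≤ (2 ^ (Fintype.card γ - S.card) * (Real.exp lam + Real.exp (-lam)) ^ S.card)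
          * Real.exp (-(lam * t)) := by
        refine mul_le_mul_of_nonneg_right key (Real.exp_pos _).le
    _ ≤ (2 ^ (Fintype.card γ - S.card) * (2 * Real.exp (lam ^ 2 / 2)) ^ S.card)
          * Real.exp (-(lam * t)) := by
        gcongr
    _ = 2 ^ (Fintype.card γ) * Real.exp ((S.card : ℝ) * lam ^ 2 / 2 - lam * t) := by
        rw [mul_pow, ← Real.exp_nat_mul, ← mul_assoc, mul_right_comm,
          pow_sub_mul_pow (2:ℝ) hm, mul_assoc, ← Real.exp_add]
        ring_nf

lemma card_tail_le' {γ : Type*} [Fintype γ] [DecidableEq γ] (S : Finset γ) (t lam : ℝ)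
    (hlam : 0 ≤ lam)
    [DecidablePred fun g : γ → Bool => ∑ z ∈ S, bsgn (g z) ≤ -t]
    [DecidablePred fun g : γ → Bool => t ≤ ∑ z ∈ S, bsgn (g z)] :
    (((Finset.univ.filter fun g : γ → Bool => ∑ z ∈ S, bsgn (g z) ≤ -t).card : ℝ))
      ≤ 2 ^ (Fintype.card γ) * Real.exp ((S.card : ℝ) * lam ^ 2 / 2 - lam * t) := by
  have hcard : (Finset.univ.filter fun g : γ → Bool => ∑ z ∈ S, bsgn (g z) ≤ -t).card
      = (Finset.univ.filter fun g : γ → Bool => t ≤ ∑ z ∈ S, bsgn (g z)).card := by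
    refine Finset.card_bij' (fun g _ => fun z => !(g z)) (fun g _ => fun z => !(g z))
      ?_ ?_ ?_ ?_
    · intro g hg
      rcases Finset.mem_filter.1 hg with ⟨-, h⟩
      refine Finset.mem_filter.2 ⟨Finset.mem_univ _, ?_⟩
      have : ∑ z ∈ S, bsgn (!(g z)) = -∑ z ∈ S, bsgn (g z) := by
        rw [← Finset.sum_neg_distrib]
        exact Finset.sum_congr rfl fun z _ => bsgn_not _
      rw [this]; linarith
    · intro g hg
      rcases Finset.mem_filter.1 hg with ⟨-, h⟩
      refine Finset.mem_filter.2 ⟨Finset.mem_univ _, ?_⟩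
      have : ∑ z ∈ S, bsgn (!(g z)) = -∑ z ∈ S, bsgn (g z) := by
        rw [← Finset.sum_neg_distrib]
        exact Finset.sum_congr rfl fun z _ => bsgn_not _
      rw [this]; linarith
    · intro g _; funext z; simp
    · intro g _; funext z; simp
  rw [hcard]
  exact card_tail_le S t lam hlam

lemma exists_good_fun {β : Type*} [Fintype β] [DecidableEq β] (K : ℕ) (δ : ℝ) (hδ : 0 < δ)
    (hnum : 2 * (Fintype.card β : ℝ) ^ (2 * K) < Real.exp (δ ^ 2 * (K : ℝ) ^ 2 / 2)) :
    ∃ g : β × β → Bool, ∀ A B : Finset β, A.card = K → B.card = K →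
      |∑ z ∈ A ×ˢ B, bsgn (g z)| ≤ δ * (K : ℝ) ^ 2 := by
  classical
  by_contra hcon
  push_neg at hcon
  set M2 : ℕ := Fintype.card (β × β) with hM2
  set P : Finset (Finset β) := Finset.powersetCard K Finset.univ with hP
  set Bad : Finset β × Finset β → Finset ((β × β) → Bool) :=
    fun AB => Finset.univ.filter
      (fun g => δ * (K : ℝ) ^ 2 < |∑ z ∈ AB.1 ×ˢ AB.2, bsgn (g z)|) with hBad
  have hcover : (Finset.univ : Finset ((β × β) → Bool)) ⊆ (P ×ˢ P).biUnion Bad := by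
    intro g _
    obtain ⟨A, B, hA, hB, h⟩ := hcon g
    refine Finset.mem_biUnion.2 ⟨(A, B), ?_, ?_⟩
    · exact Finset.mem_product.2 ⟨Finset.mem_powersetCard_univ.2 hA,
        Finset.mem_powersetCard_univ.2 hB⟩
    · exact Finset.mem_filter.2 ⟨Finset.mem_univ _, h⟩
  have hBadcard : ∀ AB : Finset β × Finset β, AB ∈ P ×ˢ P →
      ((Bad AB).card : ℝ) ≤ 2 * (2 ^ M2 * Real.exp (-(δ ^ 2 * (K : ℝ) ^ 2 / 2))) := by
    rintro ⟨A, B⟩ hAB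
    rcases Finset.mem_product.1 hAB with ⟨hA, hB⟩
    have hA' : A.card = K := Finset.mem_powersetCard_univ.1 hA
    have hB' : B.card = K := Finset.mem_powersetCard_univ.1 hB
    have hSc : (A ×ˢ B).card = K * K := by rw [Finset.card_product, hA', hB']
    have hsub : Bad (A, B) ⊆
        (Finset.univ.filter fun g : (β × β) → Bool =>
            δ * (K : ℝ) ^ 2 ≤ ∑ z ∈ A ×ˢ B, bsgn (g z)) ∪
        (Finset.univ.filter fun g : (β × β) → Bool =>
            ∑ z ∈ A ×ˢ B, bsgn (g z) ≤ -(δ * (K : ℝ) ^ 2)) := by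
      intro g hg
      rcases Finset.mem_filter.1 hg with ⟨-, h⟩
      rcases le_or_gt 0 (∑ z ∈ A ×ˢ B, bsgn (g z)) with h0 | h0
      · refine Finset.mem_union_left _ (Finset.mem_filter.2 ⟨Finset.mem_univ _, ?_⟩)
        rw [abs_of_nonneg h0] at h; linarith
      · refine Finset.mem_union_right _ (Finset.mem_filter.2 ⟨Finset.mem_univ _, ?_⟩)
        rw [abs_of_neg h0] at h; linarith
    have h1 := card_tail_le (γ := β × β) (A ×ˢ B) (δ * (K : ℝ) ^ 2) δ hδ.le
    have h2 := card_tail_le' (γ := β × β) (A ×ˢ B) (δ * (K : ℝ) ^ 2) δ hδ.le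
    rw [hSc] at h1 h2
    have hexp : ((K * K : ℕ) : ℝ) * δ ^ 2 / 2 - δ * (δ * (K : ℝ) ^ 2)
        = -(δ ^ 2 * (K : ℝ) ^ 2 / 2) := by push_cast; ring
    rw [hexp] at h1 h2
    have hcu : ((Bad (A, B)).card : ℝ) ≤
        (((Finset.univ.filter fun g : (β × β) → Bool =>
            δ * (K : ℝ) ^ 2 ≤ ∑ z ∈ A ×ˢ B, bsgn (g z)).card : ℝ))
        + (((Finset.univ.filter fun g : (β × β) → Bool =>
            ∑ z ∈ A ×ˢ B, bsgn (g z) ≤ -(δ * (K : ℝ) ^ 2)).card : ℝ)) := by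
      have := (Finset.card_le_card hsub).trans (Finset.card_union_le _ _)
      exact_mod_cast this
    calc ((Bad (A, B)).card : ℝ) ≤ _ + _ := hcu
      _ ≤ 2 ^ M2 * Real.exp (-(δ ^ 2 * (K : ℝ) ^ 2 / 2))
          + 2 ^ M2 * Real.exp (-(δ ^ 2 * (K : ℝ) ^ 2 / 2)) := add_le_add h1 h2
      _ = 2 * (2 ^ M2 * Real.exp (-(δ ^ 2 * (K : ℝ) ^ 2 / 2))) := by ring
  -- global count
  set E : ℝ := δ ^ 2 * (K : ℝ) ^ 2 / 2 with hE
  set M : ℕ := Fintype.card β with hM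
  have hcardfun : Fintype.card ((β × β) → Bool) = 2 ^ M2 := by
    simp [hM2]
  have htot : (2 : ℝ) ^ M2 ≤ ((P ×ˢ P).card : ℝ) * (2 * (2 ^ M2 * Real.exp (-E))) := by
    have hn : (2 : ℕ) ^ M2 ≤ ∑ AB ∈ P ×ˢ P, (Bad AB).card := by
      calc (2 : ℕ) ^ M2 = (Finset.univ : Finset ((β × β) → Bool)).card := by
            rw [Finset.card_univ, hcardfun]
        _ ≤ ((P ×ˢ P).biUnion Bad).card := Finset.card_le_card hcover
        _ ≤ ∑ AB ∈ P ×ˢ P, (Bad AB).card := Finset.card_biUnion_le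
    calc (2 : ℝ) ^ M2 = ((2 ^ M2 : ℕ) : ℝ) := by push_cast; ring
      _ ≤ ((∑ AB ∈ P ×ˢ P, (Bad AB).card : ℕ) : ℝ) := by exact_mod_cast hn
      _ = ∑ AB ∈ P ×ˢ P, ((Bad AB).card : ℝ) := by push_cast; ring
      _ ≤ ∑ _AB ∈ P ×ˢ P, (2 * (2 ^ M2 * Real.exp (-E))) :=
          Finset.sum_le_sum hBadcard
      _ = ((P ×ˢ P).card : ℝ) * (2 * (2 ^ M2 * Real.exp (-E))) := by
          rw [Finset.sum_const, nsmul_eq_mul]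
  have hPP : ((P ×ˢ P).card : ℝ) ≤ (M : ℝ) ^ (2 * K) := by
    have hn : (P ×ˢ P).card ≤ M ^ (2 * K) := by
      rw [Finset.card_product, hP, Finset.card_powersetCard, Finset.card_univ, ← hM,
        two_mul, pow_add]
      exact Nat.mul_le_mul (Nat.choose_le_pow M K) (Nat.choose_le_pow M K)
    exact_mod_cast hn
  have hTpos : (0 : ℝ) < 2 ^ M2 := by positivity
  have hCnn : (0 : ℝ) ≤ (M : ℝ) ^ (2 * K) := by positivity
  have hXpos : (0 : ℝ) < Real.exp (-E) := Real.exp_pos _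
  have h1 : (1 : ℝ) ≤ 2 * (M : ℝ) ^ (2 * K) * Real.exp (-E) := by
    have htot2 : (1 : ℝ) * 2 ^ M2 ≤ (2 * (M : ℝ) ^ (2 * K) * Real.exp (-E)) * 2 ^ M2 := by
      rw [one_mul]
      calc (2 : ℝ) ^ M2 ≤ ((P ×ˢ P).card : ℝ) * (2 * (2 ^ M2 * Real.exp (-E))) := htot
        _ ≤ (M : ℝ) ^ (2 * K) * (2 * (2 ^ M2 * Real.exp (-E))) := by
            refine mul_le_mul_of_nonneg_right hPP (by positivity)
        _ = (2 * (M : ℝ) ^ (2 * K) * Real.exp (-E)) * 2 ^ M2 := by ring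
    exact le_of_mul_le_mul_right (by simpa using htot2) hTpos
  have h2 : Real.exp E ≤ 2 * (M : ℝ) ^ (2 * K) := by
    have h3 := mul_le_mul_of_nonneg_right h1 (Real.exp_pos E).le
    rw [one_mul, mul_assoc, ← Real.exp_add, neg_add_cancel, Real.exp_zero, mul_one] at h3
    exact h3
  rw [hE, hM] at h2
  linarith [hnum, h2]

lemma exists_topK {α : Type*} [Fintype α] [DecidableEq α] (K : ℕ) (hK0 : 0 < K)
    (hK : K ≤ Fintype.card α) (p g : α → ℝ) (hp0 : ∀ x, 0 ≤ p x) (hp1 : ∑ x, p x = 1)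
    (hpk : ∀ x, p x ≤ ((K : ℝ))⁻¹) :
    ∃ A : Finset α, A.card = K ∧ ∑ x, p x * g x ≤ (∑ x ∈ A, g x) / K := by
  have hPne : (Finset.powersetCard K (Finset.univ : Finset α)).Nonempty := by
    rw [Finset.powersetCard_nonempty]
    simpa using hK
  obtain ⟨A, hAmem, hAmax⟩ := Finset.exists_max_image _ (fun A => ∑ x ∈ A, g x) hPne
  have hAcard : A.card = K := Finset.mem_powersetCard_univ.1 hAmem
  have hAne : A.Nonempty := Finset.card_pos.1 (hAcard ▸ hK0)
  obtain ⟨x₀, hx₀A, hx₀min⟩ := Finset.exists_min_image A g hAne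
  set m := g x₀ with hm
  have hout : ∀ y, y ∉ A → g y ≤ m := by
    intro y hy
    have hyx : y ∉ A.erase x₀ := fun h => hy (Finset.mem_of_mem_erase h)
    have hcard' : (insert y (A.erase x₀)).card = K := by
      rw [Finset.card_insert_of_notMem hyx, Finset.card_erase_of_mem hx₀A, hAcard]
      omega
    have h := hAmax (insert y (A.erase x₀)) (Finset.mem_powersetCard_univ.2 hcard')
    rw [Finset.sum_insert hyx, Finset.sum_erase_eq_sub hx₀A] at h
    linarith
  have hKpos : (0 : ℝ) < K := by exact_mod_cast hK0
  have step1 : ∑ x, p x * (g x - m) ≤ ∑ x ∈ A, p x * (g x - m) := by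
    rw [← Finset.sum_add_sum_compl A]
    have : ∑ x ∈ Aᶜ, p x * (g x - m) ≤ 0 := by
      refine Finset.sum_nonpos fun x hx => ?_
      have hxA : x ∉ A := by simpa using hx
      exact mul_nonpos_of_nonneg_of_nonpos (hp0 x) (by linarith [hout x hxA])
    linarith
  have step2 : ∑ x ∈ A, p x * (g x - m) ≤ ∑ x ∈ A, ((K : ℝ))⁻¹ * (g x - m) := by
    refine Finset.sum_le_sum fun x hx => ?_
    have h1 : 0 ≤ g x - m := by linarith [hx₀min x hx]
    exact mul_le_mul_of_nonneg_right (hpk x) h1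
  have step3 : ∑ x ∈ A, ((K : ℝ))⁻¹ * (g x - m) = (∑ x ∈ A, g x) / K - m := by
    rw [← Finset.mul_sum, Finset.sum_sub_distrib, Finset.sum_const, hAcard, nsmul_eq_mul]
    field_simp
  have expand : ∑ x, p x * (g x - m) = (∑ x, p x * g x) - m := by
    simp only [mul_sub]
    rw [Finset.sum_sub_distrib, ← Finset.sum_mul, hp1, one_mul]
  exact ⟨A, hAcard, by linarith⟩

lemma bilinear_le {β : Type*} [Fintype β] [DecidableEq β] (K : ℕ) (hK0 : 0 < K)
    (hK : K ≤ Fintype.card β) (p q : β → ℝ) (hp0 : ∀ x, 0 ≤ p x) (hp1 : ∑ x, p x = 1)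
    (hpk : ∀ x, p x ≤ ((K : ℝ))⁻¹) (hq0 : ∀ x, 0 ≤ q x) (hq1 : ∑ x, q x = 1)
    (hqk : ∀ x, q x ≤ ((K : ℝ))⁻¹) (χ : β × β → ℝ) (t : ℝ)
    (hflat : ∀ A B : Finset β, A.card = K → B.card = K → ∑ z ∈ A ×ˢ B, χ z ≤ t) :
    ∑ z : β × β, p z.1 * q z.2 * χ z ≤ t / (K : ℝ) ^ 2 := by
  have hKpos : (0 : ℝ) < K := by exact_mod_cast hK0
  have hrw : ∑ z : β × β, p z.1 * q z.2 * χ z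
      = ∑ a, p a * (∑ b, q b * χ (a, b)) := by
    rw [Fintype.sum_prod_type]
    refine Finset.sum_congr rfl fun a _ => ?_
    rw [Finset.mul_sum]
    exact Finset.sum_congr rfl fun b _ => by ring
  obtain ⟨A, hAcard, hA⟩ := exists_topK K hK0 hK p (fun a => ∑ b, q b * χ (a, b))
    hp0 hp1 hpk
  have hswap : ∑ a ∈ A, ∑ b, q b * χ (a, b) = ∑ b, q b * (∑ a ∈ A, χ (a, b)) := by
    rw [Finset.sum_comm]
    exact Finset.sum_congr rfl fun b _ => by rw [Finset.mul_sum]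
  obtain ⟨B, hBcard, hB⟩ := exists_topK K hK0 hK q (fun b => ∑ a ∈ A, χ (a, b))
    hq0 hq1 hqk
  have hABsum : ∑ b ∈ B, ∑ a ∈ A, χ (a, b) = ∑ z ∈ A ×ˢ B, χ z := by
    rw [Finset.sum_product]
    exact Finset.sum_comm
  have hfin : ∑ z ∈ A ×ˢ B, χ z ≤ t := hflat A B hAcard hBcard
  calc ∑ z : β × β, p z.1 * q z.2 * χ z
      = ∑ a, p a * (∑ b, q b * χ (a, b)) := hrw
    _ ≤ (∑ a ∈ A, ∑ b, q b * χ (a, b)) / K := hA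
    _ = (∑ b, q b * (∑ a ∈ A, χ (a, b))) / K := by rw [hswap]
    _ ≤ ((∑ b ∈ B, ∑ a ∈ A, χ (a, b)) / K) / K := by
        refine div_le_div_of_nonneg_right ?_ hKpos.le
        exact hB
    _ = (∑ z ∈ A ×ˢ B, χ z) / (K : ℝ) ^ 2 := by rw [hABsum]; ring
    _ ≤ t / (K : ℝ) ^ 2 := by
        refine div_le_div_of_nonneg_right hfin (by positivity)

lemma bilinear_abs_le {β : Type*} [Fintype β] [DecidableEq β] (K : ℕ) (hK0 : 0 < K)
    (hK : K ≤ Fintype.card β) (p q : β → ℝ) (hp0 : ∀ x, 0 ≤ p x) (hp1 : ∑ x, p x = 1)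
    (hpk : ∀ x, p x ≤ ((K : ℝ))⁻¹) (hq0 : ∀ x, 0 ≤ q x) (hq1 : ∑ x, q x = 1)
    (hqk : ∀ x, q x ≤ ((K : ℝ))⁻¹) (χ : β × β → ℝ) (t : ℝ)
    (hflat : ∀ A B : Finset β, A.card = K → B.card = K → |∑ z ∈ A ×ˢ B, χ z| ≤ t) :
    |∑ z : β × β, p z.1 * q z.2 * χ z| ≤ t / (K : ℝ) ^ 2 := by
  rw [abs_le]
  constructor
  · have h := bilinear_le K hK0 hK p q hp0 hp1 hpk hq0 hq1 hqk (fun z => -χ z) t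
      (fun A B hA hB => by
        have := (abs_le.1 (hflat A B hA hB)).1
        rw [Finset.sum_neg_distrib]
        linarith)
    have heq : ∑ z : β × β, p z.1 * q z.2 * (-χ z)
        = -∑ z : β × β, p z.1 * q z.2 * χ z := by
      rw [← Finset.sum_neg_distrib]
      exact Finset.sum_congr rfl fun z _ => by ring
    rw [heq] at h
    linarith
  · exact bilinear_le K hK0 hK p q hp0 hp1 hpk hq0 hq1 hqk χ t
      (fun A B hA hB => (abs_le.1 (hflat A B hA hB)).2)

lemma peel {β : Type*} [Fintype β] {m : ℕ} (H : β → (Fin m → β) → ℝ) :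
    ∑ x : Fin (m + 1) → β, H (x 0) (Fin.tail x) = ∑ a, ∑ v, H a v := by
  rw [← Equiv.sum_comp (Fin.consEquiv fun _ : Fin (m + 1) => β)
    (fun x => H (x 0) (Fin.tail x)), Fintype.sum_prod_type]
  refine Finset.sum_congr rfl fun a _ => Finset.sum_congr rfl fun v _ => ?_
  simp [Fin.consEquiv, Fin.tail_cons]

lemma sum_pi_two {β : Type*} [Fintype β] (p : Fin 10 → β → ℝ)
    (hp : ∀ i, ∑ v, p i v = 1) (F : β → β → ℝ) :
    ∑ x : Fin 10 → β, F (x 0) (x 1) * ∏ i, p i (x i)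
      = ∑ z : β × β, F z.1 z.2 * (p 0 z.1 * p 1 z.2) := by
  have step1 : ∑ x : Fin 10 → β, F (x 0) (x 1) * ∏ i, p i (x i)
      = ∑ a, ∑ v : Fin 9 → β, F a (v 0) * (p 0 a * ∏ i : Fin 9, p i.succ (v i)) := by
    rw [← peel (fun a v => F a (v 0) * (p 0 a * ∏ i : Fin 9, p i.succ (v i)))]
    refine Finset.sum_congr rfl fun x _ => ?_
    rw [Fin.prod_univ_succ]
    rfl
  have step2 : ∀ a, ∑ v : Fin 9 → β, F a (v 0) * (p 0 a * ∏ i : Fin 9, p i.succ (v i))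
      = ∑ b, F a b * (p 0 a * p 1 b) := by
    intro a
    have h1 : ∑ v : Fin 9 → β, F a (v 0) * (p 0 a * ∏ i : Fin 9, p i.succ (v i))
        = ∑ b, ∑ w : Fin 8 → β,
            F a b * (p 0 a * (p 1 b * ∏ i : Fin 8, p i.succ.succ (w i))) := by
      rw [← peel (fun b w => F a b * (p 0 a * (p 1 b * ∏ i : Fin 8, p i.succ.succ (w i))))]
      refine Finset.sum_congr rfl fun v _ => ?_
      rw [Fin.prod_univ_succ]
      rfl
    rw [h1]
    refine Finset.sum_congr rfl fun b _ => ?_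
    have h2 : ∑ w : Fin 8 → β, ∏ i : Fin 8, p i.succ.succ (w i) = 1 := by
      rw [sum_fun_prod]
      rw [Finset.prod_congr rfl fun i _ => hp i.succ.succ]
      exact Finset.prod_const_one
    calc ∑ w : Fin 8 → β, F a b * (p 0 a * (p 1 b * ∏ i : Fin 8, p i.succ.succ (w i)))
        = (F a b * (p 0 a * p 1 b)) * ∑ w : Fin 8 → β, ∏ i : Fin 8, p i.succ.succ (w i) := by
          rw [Finset.mul_sum]
          exact Finset.sum_congr rfl fun w _ => by ring
      _ = F a b * (p 0 a * p 1 b) := by rw [h2, mul_one]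
  rw [step1, Fintype.sum_prod_type]
  exact Finset.sum_congr rfl fun a _ => step2 a

lemma klen {n : ℕ} (hn : 36 ≤ n) : (⌈(2:ℝ) * logb 2 n⌉₊ : ℕ) ≤ n := by
  rw [Nat.ceil_le]
  have hn0 : (0:ℝ) < n := by exact_mod_cast Nat.lt_of_lt_of_le (by norm_num) hn
  have hn36 : (36:ℝ) ≤ n := by exact_mod_cast hn
  have hs : (6:ℝ) ≤ Real.sqrt n := by
    rw [show (6:ℝ) = Real.sqrt 36 by
      rw [show (36:ℝ) = 6^2 by norm_num, Real.sqrt_sq (by norm_num)]]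
    exact Real.sqrt_le_sqrt hn36
  have hsq : Real.sqrt n * Real.sqrt n = n := Real.mul_self_sqrt hn0.le
  have hlog : Real.log n ≤ 2 * Real.sqrt n := by
    have h1 : Real.log (Real.sqrt n) ≤ Real.sqrt n - 1 :=
      Real.log_le_sub_one_of_pos (Real.sqrt_pos.2 hn0)
    have h2 : Real.log (Real.sqrt n) = Real.log n / 2 := Real.log_sqrt hn0.le
    linarith
  have hl2 : (0.6931471803 : ℝ) < Real.log 2 := Real.log_two_gt_d9
  have hmain : 2 * Real.log n ≤ (n:ℝ) * Real.log 2 := by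
    nlinarith [Real.sqrt_nonneg (n:ℝ)]
  have hpos : (0:ℝ) < Real.log 2 := by linarith
  rw [Real.logb]
  have hd : Real.log n / Real.log 2 ≤ (n:ℝ) / 2 := by
    rw [div_le_div_iff₀ hpos (by norm_num)]
    linarith
  linarith

lemma Kge {n : ℕ} (hn : 1 ≤ n) :
    ((n:ℝ))^2 ≤ ((2^(⌈(2:ℝ) * logb 2 n⌉₊) : ℕ) : ℝ) := by
  have hk := Nat.le_ceil ((2:ℝ) * logb 2 n)
  have hn0 : (0:ℝ) < n := by exact_mod_cast hn
  calc ((n:ℝ))^2 = ((2:ℝ) ^ (Real.logb 2 n)) ^ (2:ℕ) := by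
        rw [Real.rpow_logb two_pos (by norm_num) hn0]
    _ = (2:ℝ) ^ ((2:ℝ) * Real.logb 2 n) := by
        rw [← Real.rpow_natCast ((2:ℝ) ^ (Real.logb 2 n)) 2, ← Real.rpow_mul (by norm_num),
          mul_comm]
        norm_num
    _ ≤ (2:ℝ) ^ ((⌈(2:ℝ) * logb 2 n⌉₊ : ℝ)) :=
        Real.rpow_le_rpow_of_exponent_le one_le_two hk
    _ = ((2^(⌈(2:ℝ) * logb 2 n⌉₊) : ℕ) : ℝ) := by
        rw [Real.rpow_natCast]; push_cast; ring

lemma hnum_holds {n K : ℕ} (δ : ℝ) (hδ : 0 < δ) (hn1 : 1 ≤ n) (hK1 : 1 ≤ K)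
    (hn6 : 6 / δ^2 ≤ (n:ℝ)) (hK : ((n:ℝ))^2 ≤ K) :
    2 * (((2^n : ℕ)):ℝ) ^ (2 * K) < Real.exp (δ^2 * (K:ℝ)^2 / 2) := by
  have hn0 : (1:ℝ) ≤ n := by exact_mod_cast hn1
  have hK0 : (1:ℝ) ≤ K := by exact_mod_cast hK1
  have h2e : (2:ℝ) < Real.exp 1 := by
    have := Real.exp_one_gt_d9; linarith
  have hLHS : 2 * (((2^n : ℕ)):ℝ) ^ (2 * K) = (2:ℝ) ^ (2 * n * K + 1) := by
    push_cast
    rw [← pow_mul, show n * (2 * K) = 2 * n * K by ring, pow_succ, mul_comm]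
  have hpow : (2:ℝ) ^ (2 * n * K + 1) < Real.exp 1 ^ (2 * n * K + 1) :=
    pow_lt_pow_left₀ h2e (by norm_num) (by omega)
  have hexp1 : Real.exp 1 ^ (2 * n * K + 1) = Real.exp ((2 * n * K + 1 : ℕ)) := by
    rw [← Real.exp_nat_mul]; norm_num
  have harith : ((2 * n * K + 1 : ℕ) : ℝ) ≤ δ^2 * (K:ℝ)^2 / 2 := by
    push_cast
    have e1 : 6 ≤ δ^2 * n := by
      rw [div_le_iff₀ (by positivity : (0:ℝ) < δ^2)] at hn6
      linarith [hn6]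
    nlinarith [mul_nonneg (mul_nonneg (by linarith : (0:ℝ) ≤ δ^2 * n - 6) (by linarith : (0:ℝ) ≤ (n:ℝ))) (by linarith : (0:ℝ) ≤ (K:ℝ)),
      mul_nonneg (mul_nonneg (by linarith : (0:ℝ) ≤ (K:ℝ) - (n:ℝ)^2) (by positivity : (0:ℝ) ≤ δ^2)) (by linarith : (0:ℝ) ≤ (K:ℝ)),
      mul_le_mul hn0 hK0 (by norm_num) (by linarith : (0:ℝ) ≤ (n:ℝ))]
  calc 2 * (((2^n : ℕ)):ℝ) ^ (2 * K) = (2:ℝ) ^ (2 * n * K + 1) := hLHS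
    _ < Real.exp ((2 * n * K + 1 : ℕ)) := by rw [← hexp1]; exact hpow
    _ ≤ Real.exp (δ^2 * (K:ℝ)^2 / 2) := Real.exp_le_exp.2 harith

end S6

open S6 in
theorem stmt6 :
    ∀ ε : ℝ, ε > 0 →
      ∃ c : ℝ, c > 1 ∧ ∃ N : ℕ, ∀ n : ℕ, n ≥ N →
        ∃ ext : (Fin 10 → BS n) → BS 1,
          ∀ p : Fin 10 → (BS n → ℝ), (∀ i, IsDist (p i)) →
            (∀ i, MinEntropyGE (p i) (⌈c * logb 2 n⌉₊ : ℝ)) →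
            statDist (distMap ext (distPi p)) (unifDist (BS 1)) ≤ ε := by
  intro ε hε
  refine ⟨2, by norm_num, max 36 ⌈6 / ε^2⌉₊, fun n hn => ?_⟩
  have hn36 : 36 ≤ n := le_trans (le_max_left _ _) hn
  have hn1 : 1 ≤ n := by omega
  have hnε : 6 / ε^2 ≤ (n:ℝ) := by
    have h := le_trans (le_max_right 36 ⌈6 / ε^2⌉₊) hn
    exact (Nat.ceil_le.1 h)
  set k : ℕ := ⌈(2:ℝ) * logb 2 n⌉₊ with hk
  set K : ℕ := 2 ^ k with hK
  have hkn : k ≤ n := klen hn36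
  have hcard : Fintype.card (BS n) = 2 ^ n := by simp
  have hK1 : 1 ≤ K := Nat.one_le_two_pow
  have hK0 : 0 < K := hK1
  have hKcard : K ≤ Fintype.card (BS n) := by
    rw [hcard]; exact Nat.pow_le_pow_right (by norm_num) hkn
  have hKn2 : ((n:ℝ))^2 ≤ (K:ℝ) := Kge hn1
  have hnum : 2 * ((Fintype.card (BS n)):ℝ) ^ (2 * K) < Real.exp (ε^2 * (K:ℝ)^2 / 2) := by
    rw [hcard]
    exact_mod_cast hnum_holds ε hε hn1 hK1 hnε hKn2
  obtain ⟨g, hg⟩ := exists_good_fun (β := BS n) K ε hε hnum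
  refine ⟨fun x => fun _ => g (x 0, x 1), ?_⟩
  intro p hdist hment
  have hp0 : ∀ i x, 0 ≤ p i x := fun i => (hdist i).1
  have hp1 : ∀ i, ∑ x, p i x = 1 := fun i => (hdist i).2
  have hpk : ∀ i x, p i x ≤ ((K : ℝ))⁻¹ := by
    intro i x
    have h := hment i x
    rw [Real.rpow_neg (by norm_num), Real.rpow_natCast] at h
    calc p i x ≤ ((2:ℝ) ^ k)⁻¹ := h
      _ = ((K : ℝ))⁻¹ := by rw [hK]; push_cast; ring
  -- the bias sum
  set S : ℝ := ∑ z : BS n × BS n, p 0 z.1 * p 1 z.2 * bsgn (g z) with hS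
  have habsS : |S| ≤ ε := by
    have h := bilinear_abs_le K hK0 hKcard (p 0) (p 1) (hp0 0) (hp1 0) (hpk 0)
      (hp0 1) (hp1 1) (hpk 1) (fun z => bsgn (g z)) (ε * (K:ℝ)^2) hg
    rw [hS]
    have hKne : ((K:ℝ))^2 ≠ 0 := by positivity
    calc |∑ z : BS n × BS n, p 0 z.1 * p 1 z.2 * bsgn (g z)|
        ≤ (ε * (K:ℝ)^2) / (K:ℝ)^2 := h
      _ = ε := by field_simp
  -- compute the pushforward
  set Ext : (Fin 10 → BS n) → BS 1 := fun x => fun _ => g (x 0, x 1) with hExt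
  have hq : ∀ c : Bool, distMap Ext (distPi p) (fun _ => c)
      = ∑ z : BS n × BS n, (if g z = c then p 0 z.1 * p 1 z.2 else 0) := by
    intro c
    have hcond : ∀ x : Fin 10 → BS n,
        (Ext x = fun _ => c) ↔ g (x 0, x 1) = c := by
      intro x
      constructor
      · intro h; exact congrFun h 0
      · intro h; funext i; exact h
    calc distMap Ext (distPi p) (fun _ => c)
        = ∑ x : Fin 10 → BS n, (if Ext x = fun _ => c then distPi p x else 0) := by
          rw [distMap, Finset.sum_filter]
      _ = ∑ x : Fin 10 → BS n,
            (fun a b => if g (a, b) = c then (1:ℝ) else 0) (x 0) (x 1)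
              * ∏ i, p i (x i) := by
          refine Finset.sum_congr rfl fun x _ => ?_
          show (if Ext x = fun _ => c then distPi p x else 0)
              = (if g (x 0, x 1) = c then (1:ℝ) else 0) * ∏ i, p i (x i)
          by_cases hgx : g (x 0, x 1) = c
          · rw [if_pos ((hcond x).2 hgx), if_pos hgx, one_mul]
            rfl
          · rw [if_neg (fun h => hgx ((hcond x).1 h)), if_neg hgx, zero_mul]
      _ = ∑ z : BS n × BS n,
            (if g (z.1, z.2) = c then (1:ℝ) else 0) * (p 0 z.1 * p 1 z.2) :=
          sum_pi_two p hp1 (fun a b => if g (a, b) = c then (1:ℝ) else 0)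
      _ = ∑ z : BS n × BS n, (if g z = c then p 0 z.1 * p 1 z.2 else 0) := by
          refine Finset.sum_congr rfl fun z _ => ?_
          by_cases hgz : g z = c
          · rw [if_pos hgz, if_pos hgz, one_mul]
          · rw [if_neg hgz, if_neg hgz, zero_mul]
  set qT : ℝ := ∑ z : BS n × BS n, (if g z = true then p 0 z.1 * p 1 z.2 else 0) with hqT
  set qF : ℝ := ∑ z : BS n × BS n, (if g z = false then p 0 z.1 * p 1 z.2 else 0) with hqF
  have htot : ∑ z : BS n × BS n, p 0 z.1 * p 1 z.2 = 1 := by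
    rw [Fintype.sum_prod_type]
    calc ∑ a, ∑ b, p 0 a * p 1 b = ∑ a, p 0 a * ∑ b, p 1 b := by
          exact Finset.sum_congr rfl fun a _ => (Finset.mul_sum _ _ _).symm
      _ = 1 := by rw [hp1 1]; simp [hp1 0]
  have hsum1 : qF + qT = 1 := by
    rw [hqF, hqT, ← Finset.sum_add_distrib, ← htot]
    refine Finset.sum_congr rfl fun z _ => ?_
    cases hgz : g z <;> simp
  have hdiff : qT - qF = S := by
    rw [hqT, hqF, hS, ← Finset.sum_sub_distrib]
    refine Finset.sum_congr rfl fun z _ => ?_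
    cases hgz : g z <;> simp [bsgn] <;> ring
  have hunif : ∀ y : BS 1, unifDist (BS 1) y = 2⁻¹ := by
    intro y
    rw [unifDist]
    norm_num
  have hstat : statDist (distMap Ext (distPi p)) (unifDist (BS 1)) = |S| / 2 := by
    rw [statDist]
    rw [← Equiv.sum_comp (Equiv.funUnique (Fin 1) Bool).symm
      (fun y => |distMap Ext (distPi p) y - unifDist (BS 1) y|)]
    rw [Fintype.sum_bool]
    have e1 : (Equiv.funUnique (Fin 1) Bool).symm true = fun _ => true := rfl
    have e2 : (Equiv.funUnique (Fin 1) Bool).symm false = fun _ => false := rfl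
    rw [e1, e2, hunif, hunif, hq true, hq false, ← hqT, ← hqF]
    have h1 : qT - 2⁻¹ = S / 2 := by linarith [hsum1, hdiff]
    have h2 : qF - 2⁻¹ = -(S / 2) := by linarith [hsum1, hdiff]
    rw [h1, h2, abs_neg]
    rw [abs_div]
    simp [abs_of_nonneg]
  rw [hstat]
  linarith [habsS, abs_nonneg S]
end
end

section
/- Let nmExt : ({0,1}^n)^s → {0,1}^m be an s-source non-malleable extractor with error ε for min-entropy k. Let k' ≥ k, let X_1,…,X_s be independent (n,k')-sources, let f_1,…,f_s : {0,1}^n → {0,1}^n be tampering functions such that some f_j has no fixed points, and fix an index i ∈ [s]. Then for every pair (z, z') ∈ {0,1}^m × {0,1}^m, the set B_{z,z'} of all y ∈ {0,1}^n such that |Pr[nmExt(X_1,…,X_{i−1}, y, X_{i+1},…,X_s) = z ∧ nmExt(f_1(X_1),…,f_{i−1}(X_{i−1}), f_i(y), f_{i+1}(X_{i+1}),…,f_s(X_s)) = z'] − 2^{−m}·Pr[nmExt(f_1(X_1),…,f_{i−1}(X_{i−1}), f_i(y), f_{i+1}(X_{i+1}),…,f_s(X_s)) = z']| > ε has size |B_{z,z'}|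 < 2^{k+1}. -/
open Finset Real

noncomputable section

/-- `nmExt` is an `s`-source non-malleable extractor with error `ε` for min-entropy `k`. -/
def IsNMsExt {n m : ℕ} (s : ℕ) (nmExt : (Fin s → BS n) → BS m) (k ε : ℝ) : Prop :=
  ∀ p : Fin s → (BS n → ℝ), (∀ i, IsDist (p i)) → (∀ i, MinEntropyGE (p i) k) →
    ∀ f : Fin s → (BS n → BS n), (∃ i, ∀ x, f i x ≠ x) →
      statDist
        (distMap (fun x : Fin s → BS n => (nmExt x, nmExt (fun i => f i (x i))))
          (distPi p))
        (distProd (unifDist (BS m))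
          (distMap (fun x : Fin s → BS n => nmExt (fun i => f i (x i))) (distPi p)))
      ≤ ε

/-- `nmExt` is a strong `s`-source non-malleable extractor with error `ε` for
min-entropy `k`: in addition to being non-malleable, for every index `i₀` the output is
close to uniform even given the tampered output and the `i₀`-th source. -/
def IsStrongNMsExt {n m : ℕ} (s : ℕ) (nmExt : (Fin s → BS n) → BS m) (k ε : ℝ) : Prop :=
  IsNMsExt s nmExt k ε ∧
  ∀ p : Fin s → (BS n → ℝ), (∀ i, IsDist (p i)) → (∀ i, MinEntropyGE (p i) k) →
    ∀ f : Fin s → (BS n → BS n), (∃ i, ∀ x, f i x ≠ x) →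
      ∀ i₀ : Fin s,
        statDist
          (distMap (fun x : Fin s → BS n => (nmExt x, nmExt (fun i => f i (x i)), x i₀))
            (distPi p))
          (distProd (unifDist (BS m))
            (distMap (fun x : Fin s → BS n => (nmExt (fun i => f i (x i)), x i₀))
              (distPi p)))
        ≤ ε

section AuxStmt10

variable {α : Type*} [Fintype α]

lemma aux_statDist_sub_le (P Q : α → ℝ) (hsum : ∑ x, P x = ∑ x, Q x) (t : α) :
    P t - Q t ≤ statDist P Q := by
  have hmax : ∀ x : α, max (P x - Q x) 0 = (|P x - Q x| + (P x - Q x)) / 2 := by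
    intro x
    rcases le_total 0 (P x - Q x) with h | h
    · rw [max_eq_left h, abs_of_nonneg h]; ring
    · rw [max_eq_right h, abs_of_nonpos h]; ring
  have h0 : ∑ x, (P x - Q x) = 0 := by
    rw [Finset.sum_sub_distrib, hsum, sub_self]
  have h2 : ∑ x, max (P x - Q x) 0 = statDist P Q := by
    rw [Finset.sum_congr rfl fun x _ => hmax x, statDist, ← Finset.sum_div,
      Finset.sum_add_distrib, h0, add_zero]
  calc P t - Q t ≤ max (P t - Q t) 0 := le_max_left _ _
    _ ≤ ∑ x, max (P x - Q x) 0 :=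
        Finset.single_le_sum (f := fun x => max (P x - Q x) 0)
          (fun x _ => le_max_right _ _) (Finset.mem_univ t)
    _ = statDist P Q := h2

lemma aux_statDist_abs_le (P Q : α → ℝ) (hP : ∑ x, P x = 1) (hQ : ∑ x, Q x = 1) (t : α) :
    |P t - Q t| ≤ statDist P Q := by
  have hsym : statDist Q P = statDist P Q := by
    unfold statDist; congr 1; exact Finset.sum_congr rfl fun x _ => abs_sub_comm _ _
  rw [abs_sub_le_iff]
  exact ⟨aux_statDist_sub_le P Q (by rw [hP, hQ]) t,
    hsym ▸ aux_statDist_sub_le Q P (by rw [hQ, hP]) t⟩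

lemma aux_distMap_eq_sum {β : Type*} [DecidableEq β] (g : α → β) (p : α → ℝ) (b : β) :
    distMap g p b = ∑ x, p x * (if g x = b then 1 else 0) := by
  rw [distMap, Finset.sum_filter]
  exact Finset.sum_congr rfl fun x _ => by by_cases h : g x = b <;> simp [h]

lemma aux_distMap_total {β : Type*} [Fintype β] [DecidableEq β] (g : α → β) (p : α → ℝ) :
    ∑ b, distMap g p b = ∑ x, p x := by
  simp_rw [distMap, Finset.sum_filter]
  rw [Finset.sum_comm]
  exact Finset.sum_congr rfl fun x _ => by simp

lemma aux_distPi_total {ι : Type*} [Fintype ι] [DecidableEq ι] {κ : ι → Type*}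
    [∀ i, Fintype (κ i)] (p : ∀ i, κ i → ℝ) (h1 : ∀ i, ∑ v, p i v = 1) :
    ∑ x, distPi p x = 1 := by
  have h := Finset.prod_univ_sum (fun _ : ι => (Finset.univ : Finset (κ _)))
    (fun i v => p i v)
  rw [Fintype.piFinset_univ] at h
  unfold distPi
  rw [← h]
  exact Finset.prod_eq_one fun i _ => h1 i

lemma aux_distPi_split {n s : ℕ} (i : Fin s) (p : Fin s → BS n → ℝ)
    (v : BS n) (w : ∀ j : {j : Fin s // j ≠ i}, BS n) :
    distPi p ((Equiv.piSplitAt i (fun _ => BS n)).symm (v, w))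
      = p i v * ∏ j : {j : Fin s // j ≠ i}, p j (w j) := by
  unfold distPi
  rw [Fintype.prod_eq_mul_prod_compl i]
  congr 1
  · simp
  · rw [Finset.prod_subtype (p := fun j : Fin s => j ≠ i) ({i}ᶜ : Finset (Fin s)) (by simp)
      (fun j => p j (((Equiv.piSplitAt i (fun _ => BS n)).symm (v, w)) j))]
    exact Finset.prod_congr rfl fun j _ => by simp [Equiv.piSplitAt_symm_apply, j.2]

lemma aux_update_split {n s : ℕ} (i : Fin s) (v y : BS n)
    (w : ∀ j : {j : Fin s // j ≠ i}, BS n) :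
    Function.update ((Equiv.piSplitAt i (fun _ => BS n)).symm (v, w)) i y
      = (Equiv.piSplitAt i (fun _ => BS n)).symm (y, w) := by
  funext j
  by_cases hj : j = i
  · subst hj; simp
  · simp [Function.update_of_ne hj, Equiv.piSplitAt_symm_apply, hj]

lemma aux_key {n s : ℕ} (i : Fin s) (p : Fin s → BS n → ℝ) (hpi : ∑ v, p i v = 1)
    (q : BS n → ℝ) (F : (Fin s → BS n) → ℝ) :
    ∑ x, distPi (Function.update p i q) x * F x
      = ∑ y, q y * ∑ x, distPi p x * F (Function.update x i y) := by
  set e := Equiv.piSplitAt i (fun _ : Fin s => BS n) with he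
  have hsum : ∀ (r : Fin s → BS n → ℝ) (G : (Fin s → BS n) → ℝ),
      ∑ x, distPi r x * G x
        = ∑ v, ∑ w, (r i v * ∏ j : {j : Fin s // j ≠ i}, r j (w j)) * G (e.symm (v, w)) := by
    intro r G
    rw [← Equiv.sum_comp e.symm (fun x => distPi r x * G x), Fintype.sum_prod_type]
    exact Finset.sum_congr rfl fun v _ => Finset.sum_congr rfl fun w _ => by
      rw [he, aux_distPi_split]
  rw [hsum]
  have hinner : ∀ y, ∑ x, distPi p x * F (Function.update x i y)
      = ∑ w, (∏ j : {j : Fin s // j ≠ i}, p j (w j)) * F (e.symm (y, w)) := by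
    intro y
    rw [hsum p (fun x => F (Function.update x i y))]
    calc ∑ v, ∑ w, (p i v * ∏ j : {j : Fin s // j ≠ i}, p j (w j))
            * F (Function.update (e.symm (v, w)) i y)
        = ∑ v, p i v * ∑ w, (∏ j : {j : Fin s // j ≠ i}, p j (w j)) * F (e.symm (y, w)) := by
          refine Finset.sum_congr rfl fun v _ => ?_
          rw [Finset.mul_sum]
          refine Finset.sum_congr rfl fun w _ => by
            rw [he, aux_update_split]; ring
      _ = (∑ v, p i v) * ∑ w, (∏ j : {j : Fin s // j ≠ i}, p j (w j)) * F (e.symm (y, w)) := by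
          rw [← Finset.sum_mul]
      _ = _ := by rw [hpi, one_mul]
  simp_rw [hinner]
  refine Finset.sum_congr rfl fun v _ => ?_
  rw [Finset.mul_sum]
  refine Finset.sum_congr rfl fun w _ => ?_
  have h2 : ∀ j : {j : Fin s // j ≠ i}, Function.update p i q j (w j) = p j (w j) :=
    fun j => by rw [Function.update_of_ne j.2]
  rw [Function.update_self, Finset.prod_congr rfl fun j _ => h2 j]; ring

end AuxStmt10

lemma aux_bad {n m s : ℕ} (nmExt : (Fin s → BS n) → BS m) (k ε : ℝ)
    (h : IsNMsExt s nmExt k ε) (k' : ℝ) (hk : k' ≥ k)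
    (p : Fin s → (BS n → ℝ)) (hp : ∀ i, IsDist (p i)) (hpk : ∀ i, MinEntropyGE (p i) k')
    (f : Fin s → (BS n → BS n)) (hf : ∃ j, ∀ x, f j x ≠ x) (i : Fin s)
    (z z' : BS m) (σ : ℝ) (hσ : σ = 1 ∨ σ = -1)
    (S : Finset (BS n)) (hScard : (2:ℝ)^k ≤ (S.card : ℝ))
    (hSD : ∀ y ∈ S, ε < σ * (distMap (fun x : Fin s → BS n =>
                (nmExt (Function.update x i y),
                 nmExt (fun j => f j (Function.update x i y j))))
              (distPi p) (z, z')
            - (2:ℝ) ^ (-(m : ℝ)) *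
              distMap (fun x : Fin s → BS n =>
                nmExt (fun j => f j (Function.update x i y j))) (distPi p) z')) :
    False := by
  classical
  have h2k : (0:ℝ) < (2:ℝ)^k := Real.rpow_pos_of_pos two_pos k
  have hSpos : (0:ℝ) < (S.card : ℝ) := lt_of_lt_of_le h2k hScard
  have hScard0 : (S.card : ℝ) ≠ 0 := ne_of_gt hSpos
  -- the uniform distribution on S
  set q : BS n → ℝ := fun y => if y ∈ S then ((S.card : ℝ))⁻¹ else 0 with hq
  have hqdist : IsDist q := by
    constructor
    · intro y
      simp only [hq]
      split
      · positivity
      · exact le_refl 0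
    · simp only [hq]
      rw [Finset.sum_ite_mem, Finset.univ_inter, Finset.sum_const, nsmul_eq_mul,
        mul_inv_cancel₀ hScard0]
  have hqent : MinEntropyGE q k := by
    intro y
    rw [hq]; dsimp only
    have h2 : (2:ℝ) ^ (-k) = ((2:ℝ)^k)⁻¹ := Real.rpow_neg (by norm_num) k
    split
    · rw [h2]; exact inv_anti₀ h2k hScard
    · rw [h2]; positivity
  set p' : Fin s → (BS n → ℝ) := Function.update p i q with hp'
  have hp'dist : ∀ j, IsDist (p' j) := by
    intro j
    by_cases hj : j = i
    · subst hj; rw [hp', Function.update_self]; exact hqdist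
    · rw [hp', Function.update_of_ne hj]; exact hp j
  have hp'ent : ∀ j, MinEntropyGE (p' j) k := by
    intro j
    by_cases hj : j = i
    · subst hj; rw [hp', Function.update_self]; exact hqent
    · rw [hp', Function.update_of_ne hj]
      intro x
      exact le_trans (hpk j x)
        (Real.rpow_le_rpow_of_exponent_le one_le_two (neg_le_neg hk))
  have hp'sum : ∀ j, ∑ v, p' j v = 1 := fun j => (hp'dist j).2
  have hpsum : ∀ j, ∑ v, p j v = 1 := fun j => (hp j).2
  -- apply the extractor hypothesis
  have hstat := h p' hp'dist hp'ent f hf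
  set g1 : (Fin s → BS n) → BS m × BS m :=
    fun x => (nmExt x, nmExt (fun j => f j (x j))) with hg1
  set g2 : (Fin s → BS n) → BS m := fun x => nmExt (fun j => f j (x j)) with hg2
  set P : BS m × BS m → ℝ := distMap g1 (distPi p') with hP
  set Q : BS m × BS m → ℝ :=
    distProd (unifDist (BS m)) (distMap g2 (distPi p')) with hQ
  have hPtot : ∑ t, P t = 1 := by
    rw [hP, aux_distMap_total, aux_distPi_total p' hp'sum]
  have hunif : ∑ a : BS m, unifDist (BS m) a = 1 := by
    simp only [unifDist]
    rw [Finset.sum_const, nsmul_eq_mul, Finset.card_univ,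
      mul_inv_cancel₀ (Nat.cast_ne_zero.mpr Fintype.card_ne_zero)]
  have hQtot : ∑ t, Q t = 1 := by
    rw [hQ, Fintype.sum_prod_type]
    simp_rw [distProd]
    rw [← Finset.sum_mul_sum]
    rw [hunif, aux_distMap_total, aux_distPi_total p' hp'sum, one_mul]
  -- the single-point bound
  have habs : |P (z, z') - Q (z, z')| ≤ ε :=
    le_trans (aux_statDist_abs_le P Q hPtot hQtot (z, z')) hstat
  -- decompose P and Q at (z,z') via aux_key
  have hPdec : P (z, z')
      = ∑ y, q y * distMap (fun x => g1 (Function.update x i y)) (distPi p) (z, z') := by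
    rw [hP, aux_distMap_eq_sum, hp', aux_key i p (hpsum i) q
      (fun x => if g1 x = (z, z') then 1 else 0)]
    exact Finset.sum_congr rfl fun y _ => by
      rw [aux_distMap_eq_sum]
  have hQ2dec : distMap g2 (distPi p') z'
      = ∑ y, q y * distMap (fun x => g2 (Function.update x i y)) (distPi p) z' := by
    rw [aux_distMap_eq_sum, hp', aux_key i p (hpsum i) q
      (fun x => if g2 x = z' then 1 else 0)]
    exact Finset.sum_congr rfl fun y _ => by
      rw [aux_distMap_eq_sum]
  have hcardBS : (Fintype.card (BS m) : ℝ) = (2:ℝ) ^ (m : ℕ) := by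
    simp [BS]
  have hunifval : unifDist (BS m) z = (2:ℝ) ^ (-(m : ℝ)) := by
    simp only [unifDist]
    rw [hcardBS, ← Real.rpow_natCast (2:ℝ) m, ← Real.rpow_neg (by norm_num)]
  -- write P - Q as a q-average of the deviations
  set D : BS n → ℝ := fun y =>
    distMap (fun x => g1 (Function.update x i y)) (distPi p) (z, z')
      - (2:ℝ) ^ (-(m : ℝ)) * distMap (fun x => g2 (Function.update x i y)) (distPi p) z'
    with hD
  have hdiff : P (z, z') - Q (z, z') = ∑ y, q y * D y := by
    rw [hPdec, hQ]
    show _ - unifDist (BS m) z * distMap g2 (distPi p') z' = _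
    rw [hunifval, hQ2dec, Finset.mul_sum, ← Finset.sum_sub_distrib]
    exact Finset.sum_congr rfl fun y _ => by rw [hD]; ring
  have hdiff2 : σ * (P (z, z') - Q (z, z')) = ∑ y ∈ S, (S.card : ℝ)⁻¹ * (σ * D y) := by
    rw [hdiff, Finset.mul_sum]
    have hterm : ∀ y : BS n, σ * (q y * D y)
        = if y ∈ S then (S.card : ℝ)⁻¹ * (σ * D y) else 0 := by
      intro y
      simp only [hq]
      split <;> ring
    rw [Finset.sum_congr rfl fun y _ => hterm y, Finset.sum_ite_mem, Finset.univ_inter]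
  have hSne : S.Nonempty := Finset.card_pos.mp (by exact_mod_cast hSpos)
  have hlt : ε < σ * (P (z, z') - Q (z, z')) := by
    rw [hdiff2]
    have : ∑ y ∈ S, (S.card : ℝ)⁻¹ * ε < ∑ y ∈ S, (S.card : ℝ)⁻¹ * (σ * D y) := by
      refine Finset.sum_lt_sum_of_nonempty hSne fun y hy => ?_
      exact mul_lt_mul_of_pos_left (by simpa [hD, hg1, hg2] using hSD y hy)
        (inv_pos.mpr hSpos)
    calc ε = ∑ y ∈ S, (S.card : ℝ)⁻¹ * ε := by
            rw [Finset.sum_const, nsmul_eq_mul, ← mul_assoc,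
              mul_inv_cancel₀ hScard0, one_mul]
      _ < _ := this
  have hle : σ * (P (z, z') - Q (z, z')) ≤ |P (z, z') - Q (z, z')| := by
    rcases hσ with h1 | h1 <;> subst h1
    · rw [one_mul]; exact le_abs_self _
    · rw [neg_one_mul]; exact neg_le_abs _
  linarith [hlt, hle, habs]

/-- the set of bad seeds `y` for a fixed output pair `(z,z')` has size
less than `2^(k+1)`.  The probabilities are taken over the independent sources
`X_1,…,X_s`, with the `i`-th coordinate replaced by the fixed value `y`
(via `Function.update`). -/
theorem stmt10 {n m s : ℕ} (nmExt : (Fin s → BS n) → BS m) (k ε : ℝ)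
    (h : IsNMsExt s nmExt k ε) (k' : ℝ) (hk : k' ≥ k)
    (p : Fin s → (BS n → ℝ)) (hp : ∀ i, IsDist (p i)) (hpk : ∀ i, MinEntropyGE (p i) k')
    (f : Fin s → (BS n → BS n)) (hf : ∃ j, ∀ x, f j x ≠ x) (i : Fin s)
    (z z' : BS m) :
    (Set.ncard {y : BS n |
        ε < |distMap (fun x : Fin s → BS n =>
                (nmExt (Function.update x i y),
                 nmExt (fun j => f j (Function.update x i y j))))
              (distPi p) (z, z')
            - (2:ℝ) ^ (-(m : ℝ)) *
              distMap (fun x : Fin s → BS n =>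
                nmExt (fun j => f j (Function.update x i y j))) (distPi p) z'|} : ℝ)
      < (2:ℝ) ^ (k + 1) := by
  classical
  by_contra hcon
  push_neg at hcon
  set D : BS n → ℝ := fun y =>
    distMap (fun x : Fin s → BS n =>
        (nmExt (Function.update x i y),
         nmExt (fun j => f j (Function.update x i y j))))
      (distPi p) (z, z')
    - (2:ℝ) ^ (-(m : ℝ)) *
      distMap (fun x : Fin s → BS n =>
        nmExt (fun j => f j (Function.update x i y j))) (distPi p) z' with hD
  have hcon' : (2:ℝ) ^ (k + 1) ≤ (({y : BS n | ε < |D y|}).ncard : ℝ) := by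
    have hsetEq : {y : BS n | ε < |D y|}
        = {y : BS n |
        ε < |distMap (fun x : Fin s → BS n =>
                (nmExt (Function.update x i y),
                 nmExt (fun j => f j (Function.update x i y j))))
              (distPi p) (z, z')
            - (2:ℝ) ^ (-(m : ℝ)) *
              distMap (fun x : Fin s → BS n =>
                nmExt (fun j => f j (Function.update x i y j))) (distPi p) z'|} := by
      simp only [hD]
    rw [hsetEq]; exact hcon
  have hfin : {y : BS n | ε < |D y|}.ncard
      = (Finset.univ.filter fun y : BS n => ε < |D y|).card := by
    rw [Set.ncard_eq_toFinset_card', Set.toFinset_setOf]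
  rw [hfin] at hcon'
  set Bpos : Finset (BS n) := Finset.univ.filter (fun y => ε < D y) with hBpos
  set Bneg : Finset (BS n) := Finset.univ.filter (fun y => ε < -(D y)) with hBneg
  have hsub : (Finset.univ.filter fun y : BS n => ε < |D y|) ⊆ Bpos ∪ Bneg := by
    intro y hy
    rw [Finset.mem_filter] at hy
    rw [Finset.mem_union, hBpos, hBneg, Finset.mem_filter, Finset.mem_filter]
    rcases lt_abs.mp hy.2 with h1 | h1
    · exact Or.inl ⟨Finset.mem_univ y, h1⟩
    · exact Or.inr ⟨Finset.mem_univ y, h1⟩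
  have hcards : ((Finset.univ.filter fun y : BS n => ε < |D y|).card : ℝ)
      ≤ (Bpos.card : ℝ) + (Bneg.card : ℝ) := by
    have := le_trans (Finset.card_le_card hsub) (Finset.card_union_le Bpos Bneg)
    exact_mod_cast this
  have h2k1 : (2:ℝ) ^ (k + 1) = (2:ℝ)^k + (2:ℝ)^k := by
    rw [Real.rpow_add two_pos, Real.rpow_one]; ring
  have hone : (2:ℝ)^k ≤ (Bpos.card : ℝ) ∨ (2:ℝ)^k ≤ (Bneg.card : ℝ) := by
    by_contra hc
    push_neg at hc
    linarith [hcon', hcards, hc.1, hc.2]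
  rcases hone with hS | hS
  · refine aux_bad nmExt k ε h k' hk p hp hpk f hf i z z' 1 (Or.inl rfl) Bpos hS ?_
    intro y hy
    rw [one_mul]
    have hmem := (Finset.mem_filter.mp (hBpos ▸ hy)).2
    rw [hD] at hmem
    simpa using hmem
  · refine aux_bad nmExt k ε h k' hk p hp hpk f hf i z z' (-1) (Or.inr rfl) Bneg hS ?_
    intro y hy
    rw [neg_one_mul]
    have hmem := (Finset.mem_filter.mp (hBneg ▸ hy)).2
    rw [hD] at hmem
    simpa using hmem
end
end
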